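/- arXiv:2207.03702 — 3 statements merged into one kernel-verified Lean document; each statement's English description precedes it below -/
import Mathlib

section
/- Let V be a meromorphic open-string vertex algebra, W_1, W_2 left V-modules, and F^{(1)}, F^{(2)}: V → H_N(W_1,W_2) two derivations that differ by an inner derivation. Then the extensions U^{(1)} and U^{(2)} of W_1 by W_2 constructed from F^{(1)} and F^{(2)} (with U^{(i)} = W_2 ⊞ W_1 and Y_{U^{(i)}}(v,x)(w_2,w_1) = (Y_{W_2}(v,x)w_2 + F^{(i)}(v,x)w_1, Y_{W_1}(v,x)w_1)) are equivalent extensions; explicitly, if F^{(1)}(v,ζ) − F^{(2)}(v,ζ) = Y_{W_2}(v,ζ)φ_{-1} − φ_{-1}Y_{W_1}(v,ζ) then T(w_2,w_1) = (w_2 + φ_{-1}(w_1), w_1) is a V-module isomorphism U^{(1)} → U^{(2)} commuting with the two exact sequences. -/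
open scoped BigOperators

noncomputable section

/-- Generalized binomial coefficient `C(a, n)` with integer upper argument, valued in `ℂ`. -/
def zchoose (a : ℤ) (n : ℕ) : ℂ :=
  (∏ i ∈ Finset.range n, ((a : ℂ) - (i : ℂ))) / (n.factorial : ℂ)

/-- A meromorphic open-string vertex algebra (MOSVA), presented through the modes
`Y u v n` (the coefficient of `x^{-n-1}` in `Y(u,x)v`).  All the axioms of
Definition 2.1 of the paper are encoded at the level of coefficients of the formal
variables; in particular weak associativity with the pole-order condition is the
coefficient form of
`(x₀+x₂)^p Y(u,x₀+x₂)Y(v,x₂)w = (x₀+x₂)^p Y(Y(u,x₀)v,x₂)w`. -/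
structure MOSVA (V : Type) [AddCommGroup V] [Module ℂ V] : Type where
  Y : V → V → ℤ → V
  vac : V
  dV : V → V
  DV : V → V
  grading : ℤ → Submodule ℂ V
  Y_add_left : ∀ (u u' v : V) (n : ℤ), Y (u + u') v n = Y u v n + Y u' v n
  Y_smul_left : ∀ (c : ℂ) (u v : V) (n : ℤ), Y (c • u) v n = c • Y u v n
  Y_add_right : ∀ (u v v' : V) (n : ℤ), Y u (v + v') n = Y u v n + Y u v' n
  Y_smul_right : ∀ (c : ℂ) (u v : V) (n : ℤ), Y u (c • v) n = c • Y u v n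
  d_linear : IsLinearMap ℂ dV
  D_linear : IsLinearMap ℂ DV
  grading_indep : ∀ n : ℤ, Disjoint (grading n) (⨆ (m : ℤ) (_ : m ≠ n), grading m)
  grading_sup : (⨆ n : ℤ, grading n) = ⊤
  lower_bound : ∃ K : ℤ, ∀ n : ℤ, n < K → grading n = ⊥
  d_eigen : ∀ n : ℤ, ∀ v ∈ grading n, dV v = (n : ℂ) • v
  trunc : ∀ u v : V, ∃ K : ℤ, ∀ n : ℤ, K ≤ n → Y u v n = 0
  identity : ∀ (v : V) (n : ℤ), Y vac v n = if n = -1 then v else 0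
  creation : ∀ (u : V) (n : ℤ), 0 ≤ n → Y u vac n = 0
  creation_const : ∀ u : V, Y u vac (-1) = u
  d_comm : ∀ (u v : V) (n : ℤ),
    dV (Y u v n) = Y (dV u) v n + Y u (dV v) n - ((n + 1 : ℤ) : ℂ) • Y u v n
  D_deriv : ∀ (u v : V) (n : ℤ), Y (DV u) v n = (-(n : ℂ)) • Y u v (n - 1)
  D_comm : ∀ (u v : V) (n : ℤ),
    DV (Y u v n) - Y u (DV v) n = (-(n : ℂ)) • Y u v (n - 1)
  weak_assoc : ∀ u w : V, ∃ p : ℕ, ∀ (v : V) (a b : ℤ),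
    (∑ᶠ i : ℕ, zchoose (a + (i : ℤ)) i • Y u (Y v w ((i : ℤ) - b - 1)) ((p : ℤ) - a - (i : ℤ) - 1)) =
      ∑ i ∈ Finset.range (p + 1),
        ((p.choose i : ℕ) : ℂ) • Y (Y u v ((p : ℤ) - (i : ℤ) - a - 1)) w ((i : ℤ) - b - 1)

/-- The data of a left module for a MOSVA: the modes of the vertex operator map,
the grading operator `dW`, the operator `DW`, and the `ℂ`-grading. -/
structure LModData (V : Type) (W : Type) [AddCommGroup V] [Module ℂ V]
    [AddCommGroup W] [Module ℂ W] : Type where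
  Y : V → W → ℤ → W
  dW : W → W
  DW : W → W
  grading : ℂ → Submodule ℂ W

/-- The axioms making the data `d` into a left module for the MOSVA `A`
(Definition 2.3 of the paper, encoded at the level of coefficients). -/
structure IsLMod {V W : Type} [AddCommGroup V] [Module ℂ V] [AddCommGroup W] [Module ℂ W]
    (A : MOSVA V) (d : LModData V W) : Prop where
  Y_add_left : ∀ (u u' : V) (w : W) (n : ℤ), d.Y (u + u') w n = d.Y u w n + d.Y u' w n
  Y_smul_left : ∀ (c : ℂ) (u : V) (w : W) (n : ℤ), d.Y (c • u) w n = c • d.Y u w n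
  Y_add_right : ∀ (u : V) (w w' : W) (n : ℤ), d.Y u (w + w') n = d.Y u w n + d.Y u w' n
  Y_smul_right : ∀ (c : ℂ) (u : V) (w : W) (n : ℤ), d.Y u (c • w) n = c • d.Y u w n
  d_linear : IsLinearMap ℂ d.dW
  D_linear : IsLinearMap ℂ d.DW
  grading_indep : ∀ m : ℂ, Disjoint (d.grading m) (⨆ (m' : ℂ) (_ : m' ≠ m), d.grading m')
  grading_sup : (⨆ m : ℂ, d.grading m) = ⊤
  lower_bound : ∃ K : ℝ, ∀ m : ℂ, m.re < K → d.grading m = ⊥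
  d_eigen : ∀ m : ℂ, ∀ w ∈ d.grading m, d.dW w = m • w
  D_wt : ∀ m : ℂ, ∀ w ∈ d.grading m, d.DW w ∈ d.grading (m + 1)
  trunc : ∀ (v : V) (w : W), ∃ K : ℤ, ∀ n : ℤ, K ≤ n → d.Y v w n = 0
  identity : ∀ (w : W) (n : ℤ), d.Y A.vac w n = if n = -1 then w else 0
  d_comm : ∀ (v : V) (w : W) (n : ℤ),
    d.dW (d.Y v w n) = d.Y (A.dV v) w n + d.Y v (d.dW w) n - ((n + 1 : ℤ) : ℂ) • d.Y v w n
  D_deriv : ∀ (v : V) (w : W) (n : ℤ), d.Y (A.DV v) w n = (-(n : ℂ)) • d.Y v w (n - 1)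
  D_comm : ∀ (v : V) (w : W) (n : ℤ),
    d.DW (d.Y v w n) - d.Y v (d.DW w) n = (-(n : ℂ)) • d.Y v w (n - 1)
  weak_assoc : ∀ (v₁ : V) (w : W), ∃ p : ℕ, ∀ (v₂ : V) (a b : ℤ),
    (∑ᶠ i : ℕ, zchoose (a + (i : ℤ)) i •
        d.Y v₁ (d.Y v₂ w ((i : ℤ) - b - 1)) ((p : ℤ) - a - (i : ℤ) - 1)) =
      ∑ i ∈ Finset.range (p + 1),
        ((p.choose i : ℕ) : ℂ) • d.Y (A.Y v₁ v₂ ((p : ℤ) - (i : ℤ) - a - 1)) w ((i : ℤ) - b - 1)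

/-- A left module for a MOSVA: data together with the module axioms. -/
structure LMod {V : Type} [AddCommGroup V] [Module ℂ V] (A : MOSVA V)
    (W : Type) [AddCommGroup W] [Module ℂ W] extends LModData V W : Type where
  prop : IsLMod A toLModData

/-- A homomorphism of left `V`-modules: a linear map commuting with `d`, `D`, and
all vertex operators. -/
def IsHomData {V W W' : Type} [AddCommGroup V] [Module ℂ V] [AddCommGroup W] [Module ℂ W]
    [AddCommGroup W'] [Module ℂ W'] (_ : MOSVA V) (d : LModData V W) (d' : LModData V W')
    (f : W → W') : Prop :=
  IsLinearMap ℂ f ∧ (∀ w, f (d.dW w) = d'.dW (f w)) ∧ (∀ w, f (d.DW w) = d'.DW (f w)) ∧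
    ∀ (v : V) (w : W) (n : ℤ), f (d.Y v w n) = d'.Y v (f w) n

/-- The candidate left-module structure on the subspace `S = ψ(W₁)` of an extension:
vertex operators `π₁ Y_U`, grading operator `d_U|_S`, operator `π₁ D_U|_S`, where
`π₁` is the projection onto `S` along `W₂`. -/
def rangeData {V W : Type} [AddCommGroup V] [Module ℂ V] [AddCommGroup W] [Module ℂ W]
    (_ : MOSVA V) (dU : LModData V W) (S W2r : Submodule ℂ W) (hc : IsCompl S W2r)
    (hdS : ∀ u ∈ S, dU.dW u ∈ S) : LModData V ↥S where
  Y v s n := Submodule.linearProjOfIsCompl S W2r hc (dU.Y v (↑s) n)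
  dW s := ⟨dU.dW ↑s, hdS _ s.2⟩
  DW s := Submodule.linearProjOfIsCompl S W2r hc (dU.DW ↑s)
  grading m := (dU.grading m).comap S.subtype

/-- Coefficient families: an element `φ` of `H_N(W₁,W₂)` is recorded through the
coefficients `φ k : W₁ → W₂` of `ζ^k` in `φ(ζ)w₁`. -/
abbrev HNFam (W1 W2 : Type) := ℤ → W1 → W2

/-- Membership in the graded (restricted) dual `W'` of a graded module. -/
def InGDual {V W : Type} [AddCommGroup V] [Module ℂ V] [AddCommGroup W] [Module ℂ W]
    (d : LModData V W) (w' : W → ℂ) : Prop :=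
  IsLinearMap ℂ w' ∧ ∃ s : Finset ℂ, ∀ μ : ℂ, μ ∉ s → ∀ w ∈ d.grading μ, w' w = 0

/-- Iterated application of modes of vertex operators:
`Y(v 0)_{m 0} Y(v 1)_{m 1} ⋯ Y(v (l-1))_{m (l-1)} w`. -/
def modesApply {V W : Type} [AddCommGroup V] [Module ℂ V] [AddCommGroup W] [Module ℂ W]
    (d : LModData V W) (l : ℕ) (v : Fin l → V) (m : Fin l → ℤ) (w : W) : W :=
  (List.finRange l).foldr (fun i acc => d.Y (v i) acc (m i)) w

/-- The general term of the series
`⟨w₂', Y_{W₂}(v₁,z₁)⋯Y_{W₂}(v_k,z_k) φ(ζ) Y_{W₁}(v_{k+1},z_{k+1})⋯Y_{W₁}(v_{k+l},z_{k+l}) w₁⟩`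
appearing in the composability condition for `H_N(W₁,W₂)`. -/
def HNterm {V W1 W2 : Type} [AddCommGroup V] [Module ℂ V] [AddCommGroup W1] [Module ℂ W1]
    [AddCommGroup W2] [Module ℂ W2] (d1 : LModData V W1) (d2 : LModData V W2)
    (φ : HNFam W1 W2) (k l : ℕ) (v : Fin (k + l) → V) (w1 : W1) (w2' : W2 → ℂ)
    (z : Fin (k + l) → ℂ) (ζ : ℂ) (q : (Fin (k + l) → ℤ) × ℤ) : ℂ :=
  w2' (modesApply d2 k (fun i => v (Fin.castAdd l i)) (fun i => q.1 (Fin.castAdd l i))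
      (φ q.2 (modesApply d1 l (fun j => v (Fin.natAdd k j)) (fun j => q.1 (Fin.natAdd k j)) w1)))
    * (∏ i, z i ^ (-q.1 i - 1)) * ζ ^ q.2

/-- The region `|z₁| > ⋯ > |z_k| > |ζ| > |z_{k+1}| > ⋯ > |z_{k+l}| > 0`. -/
def Region1 (k l : ℕ) (z : Fin (k + l) → ℂ) (ζ : ℂ) : Prop :=
  (∀ i j : Fin (k + l), i < j → ‖z j‖ < ‖z i‖) ∧
  (∀ i : Fin (k + l), (i : ℕ) < k → ‖ζ‖ < ‖z i‖) ∧
  (∀ i : Fin (k + l), k ≤ (i : ℕ) → ‖z i‖ < ‖ζ‖) ∧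
  (∀ i, z i ≠ 0) ∧ ζ ≠ 0

/-- The last index among `z₁, …, z_{k+l}`. -/
def lastIdx (k l : ℕ) (h : 1 ≤ k + l) : Fin (k + l) := ⟨k + l - 1, by omega⟩

/-- The region
`|z_{k+l}| > |z₁-z_{k+l}| > ⋯ > |z_k - z_{k+l}| > |ζ-z_{k+l}| > |z_{k+1}-z_{k+l}| > ⋯ > 0`
used in the `N`-weight-degree condition. -/
def Region2 {k l : ℕ} (h : 1 ≤ k + l) (z : Fin (k + l) → ℂ) (ζ : ℂ) : Prop :=
  (∀ i, i ≠ lastIdx k l h → ‖z i - z (lastIdx k l h)‖ < ‖z (lastIdx k l h)‖) ∧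
  ‖ζ - z (lastIdx k l h)‖ < ‖z (lastIdx k l h)‖ ∧
  (∀ i j : Fin (k + l), i < j → j ≠ lastIdx k l h →
    ‖z j - z (lastIdx k l h)‖ < ‖z i - z (lastIdx k l h)‖) ∧
  (∀ i : Fin (k + l), (i : ℕ) < k → ‖ζ - z (lastIdx k l h)‖ < ‖z i - z (lastIdx k l h)‖) ∧
  (∀ i : Fin (k + l), k ≤ (i : ℕ) → i ≠ lastIdx k l h →
    ‖z i - z (lastIdx k l h)‖ < ‖ζ - z (lastIdx k l h)‖) ∧
  (∀ i, i ≠ lastIdx k l h → z i - z (lastIdx k l h) ≠ 0) ∧ ζ - z (lastIdx k l h) ≠ 0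

/-- The product `ζ^m ∏ z_i^{r_i} ∏_{i<j} (z_i-z_j)^{p_{ij}} ∏ (z_i-ζ)^{s_i}`
clearing all possible poles. -/
def HNdenom (k l : ℕ) (m : ℕ) (r : Fin (k + l) → ℕ) (pp : Fin (k + l) → Fin (k + l) → ℕ)
    (s : Fin (k + l) → ℕ) (z : Fin (k + l) → ℂ) (ζ : ℂ) : ℂ :=
  ζ ^ m * (∏ i, z i ^ r i) * (∏ i, ∏ j, if i < j then (z i - z j) ^ pp i j else 1) *
    (∏ i, (z i - ζ) ^ s i)

/-- A homogeneous element of the bimodule `H_N(W₁,W₂)` of weight `n`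
(Proposition-Definition 2.15 of the paper): a family of linear coefficient maps
satisfying the `D`-derivative property, the `d`-conjugation (weight) property,
the composability condition, and the `N`-weight-degree condition.  The rational
functions appearing in the composability condition are encoded through a polynomial
numerator `g` and the pole-clearing denominator `HNdenom`, with the pole orders
depending only on the prescribed pairs; the `N`-weight-degree condition is encoded
through the expansion around `z_{k+l}` with total-degree lower bound. -/
structure IsHNhomog {V W1 W2 : Type} [AddCommGroup V] [Module ℂ V] [AddCommGroup W1]
    [Module ℂ W1] [AddCommGroup W2] [Module ℂ W2] (A : MOSVA V) (d1 : LModData V W1)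
    (d2 : LModData V W2) (N : ℤ) (n : ℤ) (φ : HNFam W1 W2) : Prop where
  lin : ∀ k : ℤ, IsLinearMap ℂ (φ k)
  pole_finite : ∀ w1 : W1, ∃ K : ℤ, ∀ k : ℤ, k < K → φ k w1 = 0
  D_prop : ∀ (k : ℤ) (w1 : W1),
    ((k + 1 : ℤ) : ℂ) • φ (k + 1) w1 = d2.DW (φ k w1) - φ k (d1.DW w1)
  wt_mem : ∀ (μ : ℂ) (w1 : W1), w1 ∈ d1.grading μ → ∀ k : ℤ,
    φ k w1 ∈ d2.grading (μ + (n : ℂ) + (k : ℂ))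
  comp : ∃ (r : V → W1 → ℕ) (mφ : W1 → ℕ) (pp : V → V → ℕ) (ss : V → ℕ),
    ∀ (k l : ℕ) (v : Fin (k + l) → V) (w1 : W1) (w2' : W2 → ℂ), InGDual d2 w2' →
    ∃ g : MvPolynomial (Fin (k + l) ⊕ Unit) ℂ,
      (∀ (z : Fin (k + l) → ℂ) (ζ : ℂ), Region1 k l z ζ →
        Summable (HNterm d1 d2 φ k l v w1 w2' z ζ) ∧
        (∑' q : (Fin (k + l) → ℤ) × ℤ, HNterm d1 d2 φ k l v w1 w2' z ζ q) *
            HNdenom k l (mφ w1) (fun i => r (v i) w1) (fun i j => pp (v i) (v j))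
              (fun i => ss (v i)) z ζ
          = MvPolynomial.eval (Sum.elim z fun _ => ζ) g) ∧
      (∀ wtv : Fin (k + l) → ℤ, (∀ i, v i ∈ A.grading (wtv i)) → ∀ h1 : 1 ≤ k + l,
        ∃ c : ((Fin (k + l) → ℤ) × ℤ) → ℂ,
          (∀ q : (Fin (k + l) → ℤ) × ℤ, c q ≠ 0 →
            N - (∑ i, wtv i) - n ≤ (∑ i ∈ Finset.univ.erase (lastIdx k l h1), q.1 i) + q.2) ∧
          (∀ (dd : Fin (k + l) → ℤ) (e : ℤ),
            {t : ℤ | c (Function.update dd (lastIdx k l h1) t, e) ≠ 0}.Finite) ∧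
          (∀ (z : Fin (k + l) → ℂ) (ζ : ℂ), Region2 h1 z ζ →
            Summable (fun q : (Fin (k + l) → ℤ) × ℤ =>
              c q * (∏ i, (if i = lastIdx k l h1 then z i
                  else z i - z (lastIdx k l h1)) ^ q.1 i) *
                (ζ - z (lastIdx k l h1)) ^ q.2) ∧
            (∑' q : (Fin (k + l) → ℤ) × ℤ,
                c q * (∏ i, (if i = lastIdx k l h1 then z i
                    else z i - z (lastIdx k l h1)) ^ q.1 i) *
                  (ζ - z (lastIdx k l h1)) ^ q.2) *
              HNdenom k l (mφ w1) (fun i => r (v i) w1) (fun i j => pp (v i) (v j))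
                (fun i => ss (v i)) z ζ
            = MvPolynomial.eval (Sum.elim z fun _ => ζ) g))

/-- Membership in `H_N(W₁,W₂)`: a finite sum of homogeneous elements. -/
def IsHN {V W1 W2 : Type} [AddCommGroup V] [Module ℂ V] [AddCommGroup W1] [Module ℂ W1]
    [AddCommGroup W2] [Module ℂ W2] (A : MOSVA V) (d1 : LModData V W1)
    (d2 : LModData V W2) (N : ℤ) (φ : HNFam W1 W2) : Prop :=
  ∃ (s : Finset ℤ) (ψ : ℤ → HNFam W1 W2), (∀ n ∈ s, IsHNhomog A d1 d2 N n (ψ n)) ∧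
    ∀ (k : ℤ) (w1 : W1), φ k w1 = ∑ n ∈ s, ψ n k w1

/-- A rational function of two variables with the only possible poles at
`u = 0`, `w = 0`, `u = w`. -/
def Rat2 (F : ℂ → ℂ → ℂ) : Prop :=
  ∃ (g : MvPolynomial (Fin 2) ℂ) (p1 p2 p3 : ℕ),
    ∀ u w : ℂ, u ≠ 0 → w ≠ 0 → u ≠ w →
      F u w * (u ^ p1 * w ^ p2 * (u - w) ^ p3) = MvPolynomial.eval ![u, w] g

/-- `F : V → H_N(W₁,W₂)` is a derivation:
`F(Y(u,x)v) = Y_H^L(u,x)F(v) + e^{xD_H} Y_H^{s(R)}(v,-x)F(u)`.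
This is encoded through the pairings with the graded dual: for each `u, v, w₁, w₂'`
the series `⟨w₂', Y_{W₂}(u,z)F(v)(ζ)w₁⟩` and `⟨w₂', F(u)(z)Y_{W₁}(v,ζ)w₁⟩` converge in
their natural regions to rational functions `FL`, `FR` with the only possible poles at
`0` and at coinciding variables, and
`⟨w₂', F(Y(u,x)v)(ζ)w₁⟩ = FL(ζ+x,ζ) + FR(ζ+x,ζ)` for `|ζ| > |x| > 0`, which is the
rigorous meaning of the displayed identity of `H_N`-valued formal series. -/
def IsHNDeriv {V W1 W2 : Type} [AddCommGroup V] [Module ℂ V] [AddCommGroup W1]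
    [Module ℂ W1] [AddCommGroup W2] [Module ℂ W2] (A : MOSVA V) (d1 : LModData V W1)
    (d2 : LModData V W2) (F : V → HNFam W1 W2) : Prop :=
  (∀ (u u' : V) (k : ℤ) (w1 : W1), F (u + u') k w1 = F u k w1 + F u' k w1) ∧
  (∀ (c : ℂ) (u : V) (k : ℤ) (w1 : W1), F (c • u) k w1 = c • F u k w1) ∧
  (∀ (u v : V) (w1 : W1) (w2' : W2 → ℂ), InGDual d2 w2' →
    ∃ FL FR : ℂ → ℂ → ℂ, Rat2 FL ∧ Rat2 FR ∧
      (∀ zu zw : ℂ, ‖zw‖ < ‖zu‖ → zw ≠ 0 →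
        Summable (fun q : ℤ × ℤ =>
          w2' (d2.Y u (F v q.2 w1) q.1) * zu ^ (-q.1 - 1) * zw ^ q.2) ∧
        (∑' q : ℤ × ℤ, w2' (d2.Y u (F v q.2 w1) q.1) * zu ^ (-q.1 - 1) * zw ^ q.2)
          = FL zu zw) ∧
      (∀ zw zu : ℂ, ‖zu‖ < ‖zw‖ → zu ≠ 0 →
        Summable (fun q : ℤ × ℤ =>
          w2' (F u q.1 (d1.Y v w1 q.2)) * zw ^ q.1 * zu ^ (-q.2 - 1)) ∧
        (∑' q : ℤ × ℤ, w2' (F u q.1 (d1.Y v w1 q.2)) * zw ^ q.1 * zu ^ (-q.2 - 1))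
          = FR zw zu) ∧
      (∀ x ζ : ℂ, ‖x‖ < ‖ζ‖ → x ≠ 0 →
        Summable (fun q : ℤ × ℤ =>
          w2' (F (A.Y u v q.1) q.2 w1) * x ^ (-q.1 - 1) * ζ ^ q.2) ∧
        (∑' q : ℤ × ℤ, w2' (F (A.Y u v q.1) q.2 w1) * x ^ (-q.1 - 1) * ζ ^ q.2)
          = FL (ζ + x) ζ + FR (ζ + x) ζ))

/-- The inner derivation associated to a vacuum-like element `θ` of `H_N(W₁,W₂)`
(a constant `φ(ζ) = θ`), namely `v ↦ Y_{W₂}(v,ζ)θ - θ Y_{W₁}(v,ζ)`. -/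
def innerFam {V W1 W2 : Type} [AddCommGroup V] [Module ℂ V] [AddCommGroup W1]
    [Module ℂ W1] [AddCommGroup W2] [Module ℂ W2] (d1 : LModData V W1)
    (d2 : LModData V W2) (θ : W1 → W2) (v : V) : HNFam W1 W2 :=
  fun k w1 => d2.Y v (θ w1) (-k - 1) - θ (d1.Y v w1 (-k - 1))

/-- The element of `H_N(W₁,W₂)` given by the constant function `φ(ζ) = θ`. -/
def constFam {W1 W2 : Type} [AddCommGroup W2] (θ : W1 → W2) : HNFam W1 W2 :=
  fun k w1 => if k = 0 then θ w1 else 0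

/-- A derivation `V → H_N(W₁,W₂)` in the full sense: a grading-preserving linear
map whose values lie in `H_N(W₁,W₂)` and which satisfies the derivation identity. -/
def IsHNDerivFull {V W1 W2 : Type} [AddCommGroup V] [Module ℂ V] [AddCommGroup W1]
    [Module ℂ W1] [AddCommGroup W2] [Module ℂ W2] (A : MOSVA V) (d1 : LModData V W1)
    (d2 : LModData V W2) (N : ℤ) (F : V → HNFam W1 W2) : Prop :=
  (∀ nv : ℤ, ∀ v ∈ A.grading nv, IsHNhomog A d1 d2 N nv (F v)) ∧
  (∀ v : V, IsHN A d1 d2 N (F v)) ∧ IsHNDeriv A d1 d2 F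

/-- The candidate left-module structure on `U = W₂ ⊞ W₁` built from a derivation
`F : V → H_N(W₁,W₂)`:
`Y_U(v,x)(w₂,w₁) = (Y_{W₂}(v,x)w₂ + F(v,x)w₁, Y_{W₁}(v,x)w₁)`,
`d_U = d_{W₂} ⊞ d_{W₁}`, `D_U = D_{W₂} ⊞ D_{W₁}`. -/
def prodData {V W1 W2 : Type} [AddCommGroup V] [Module ℂ V] [AddCommGroup W1]
    [Module ℂ W1] [AddCommGroup W2] [Module ℂ W2]
    (d1 : LModData V W1) (d2 : LModData V W2) (F : V → HNFam W1 W2) :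
    LModData V (W2 × W1) where
  Y v u n := (d2.Y v u.1 n + F v (-n - 1) u.2, d1.Y v u.2 n)
  dW u := (d2.dW u.1, d1.dW u.2)
  DW u := (d2.DW u.1, d1.DW u.2)
  grading m := (d2.grading m).prod (d1.grading m)

/-- Proposition 3.13 of the paper.
Let `F⁽¹⁾, F⁽²⁾ : V → H_N(W₁,W₂)` be two derivations that differ by an inner
derivation, say `F⁽¹⁾(v,ζ) - F⁽²⁾(v,ζ) = Y_{W₂}(v,ζ)φ₋₁ - φ₋₁Y_{W₁}(v,ζ)` with `φ₋₁`
the linear map attached to a vacuum-like element of `H_N(W₁,W₂)`.  Then the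
extensions `U⁽¹⁾`, `U⁽²⁾` constructed from `F⁽¹⁾`, `F⁽²⁾` are equivalent; explicitly,
`T(w₂,w₁) = (w₂ + φ₋₁(w₁), w₁)` is a `V`-module isomorphism `U⁽¹⁾ → U⁽²⁾` commuting
with the two exact sequences. -/
theorem inner_difference_gives_equivalent_extensions
    {V W1 W2 : Type}
    [AddCommGroup V] [Module ℂ V] [AddCommGroup W1] [Module ℂ W1]
    [AddCommGroup W2] [Module ℂ W2]
    (A : MOSVA V) (M1 : LMod A W1) (M2 : LMod A W2) (N : ℤ)
    (F1 F2 : V → HNFam W1 W2)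
    (hF1 : IsHNDerivFull A M1.toLModData M2.toLModData N F1)
    (hF2 : IsHNDerivFull A M1.toLModData M2.toLModData N F2)
    (φneg : W1 → W2) (hφlin : IsLinearMap ℂ φneg)
    (hvac : IsHN A M1.toLModData M2.toLModData N (constFam φneg) ∧
      IsHNhomog A M1.toLModData M2.toLModData N 0 (constFam φneg))
    -- `F⁽¹⁾ - F⁽²⁾` is the inner derivation attached to `φ₋₁`
    (hdiff : ∀ (v : V) (k : ℤ) (w1 : W1),
      F1 v k w1 - F2 v k w1 = innerFam M1.toLModData M2.toLModData φneg v k w1) :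
    -- `T(w₂,w₁) = (w₂ + φ₋₁ w₁, w₁)` is an isomorphism of the two extensions:
    Function.Bijective (fun u : W2 × W1 => ((u.1 + φneg u.2, u.2) : W2 × W1)) ∧
    IsHomData A (prodData M1.toLModData M2.toLModData F1)
        (prodData M1.toLModData M2.toLModData F2)
        (fun u : W2 × W1 => ((u.1 + φneg u.2, u.2) : W2 × W1)) ∧
    -- `T` commutes with the inclusions of `W₂` and the projections to `W₁`
    (∀ w2 : W2, (fun u : W2 × W1 => ((u.1 + φneg u.2, u.2) : W2 × W1)) (w2, 0) = (w2, 0)) ∧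
    (∀ u : W2 × W1, ((u.1 + φneg u.2, u.2) : W2 × W1).2 = u.2) := by
  obtain ⟨_, hhom⟩ := hvac
  -- `φ₋₁` commutes with the `D` operators, from the `D`-derivative property
  -- of the vacuum-like element.
  have hDW : ∀ w : W1, M2.toLModData.DW (φneg w) = φneg (M1.toLModData.DW w) := by
    intro w
    have h := hhom.D_prop 0 w
    simp [constFam] at h
    exact (sub_eq_zero.mp h.symm)
  -- `φ₋₁` commutes with the grading operators, from the weight property.
  have hdW : ∀ w : W1, M2.toLModData.dW (φneg w) = φneg (M1.toLModData.dW w) := by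
    intro w
    have hw : w ∈ (⨆ m : ℂ, M1.toLModData.grading m) := by
      rw [M1.prop.grading_sup]; trivial
    refine Submodule.iSup_induction (motive := fun w =>
        M2.toLModData.dW (φneg w) = φneg (M1.toLModData.dW w))
      (fun m : ℂ => M1.toLModData.grading m) hw ?_ ?_ ?_
    · intro μ x hx
      have hmem : φneg x ∈ M2.toLModData.grading μ := by
        have := hhom.wt_mem μ x hx 0
        simpa [constFam] using this
      rw [M2.prop.d_eigen μ _ hmem, M1.prop.d_eigen μ x hx, hφlin.map_smul]
    · show M2.toLModData.dW (φneg 0) = φneg (M1.toLModData.dW 0)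
      rw [hφlin.map_zero, M1.prop.d_linear.map_zero, M2.prop.d_linear.map_zero,
        hφlin.map_zero]
    · intro x y hx hy
      rw [hφlin.map_add, M1.prop.d_linear.map_add, M2.prop.d_linear.map_add,
        hφlin.map_add, hx, hy]
  refine ⟨?_, ⟨?_, ?_, ?_, ?_⟩, ?_, ?_⟩
  · -- bijectivity
    refine Function.bijective_iff_has_inverse.mpr
      ⟨fun u => (u.1 - φneg u.2, u.2), fun u => by simp, fun u => by simp⟩
  · -- linearity
    constructor
    · intro u u'
      simp only [Prod.fst_add, Prod.snd_add, hφlin.map_add, Prod.mk_add_mk]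
      exact Prod.ext (by abel) rfl
    · intro c u
      simp only [Prod.smul_fst, Prod.smul_snd, hφlin.map_smul, Prod.smul_mk,
        smul_add]
  · -- commutes with d
    intro u
    simp only [prodData, hφlin.map_add]
    exact Prod.ext (by rw [M2.prop.d_linear.map_add, hdW]) rfl
  · -- commutes with D
    intro u
    simp only [prodData]
    exact Prod.ext (by rw [M2.prop.D_linear.map_add, hDW]) rfl
  · -- commutes with the vertex operators
    intro v u n
    simp only [prodData]
    refine Prod.ext ?_ rfl
    simp only [M2.prop.Y_add_right]
    have h := hdiff v (-n - 1) u.2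
    have hn : -(-n - 1) - 1 = n := by ring
    rw [innerFam, hn] at h
    have : F1 v (-n - 1) u.2 = F2 v (-n - 1) u.2 +
        (M2.toLModData.Y v (φneg u.2) n - φneg (M1.toLModData.Y v u.2 n)) := by
      rw [← h]; abel
    rw [this]; abel
  · intro w2
    simp [hφlin.map_zero]
  · intro u
    rfl
end
end

section
/- Let Vir be the Virasoro algebra and W = M(c,h) a Verma module, with every w ∈ W written in its standard expression and Ind(w) its index. Then: (1) for every m ≥ 2 and w ∈ W, Ind(L(-m)w) = Ind(w); (2) for fixed n ∈ ℤ_+ and n_1,…,n_s ≥ 2 (not necessarily decreasing), Ind(L(m)L(-n_1)⋯L(-n_s)L(-1)^n 1_{c,h}) ≤ n+1 for all m ∈ ℤ, with equality for only finitely many m; moreover, among integers m ≥ −1, only finitely many satisfy Ind(L(m)L(-n_1)⋯L(-n_s)L(-1)^n 1_{c,h}) ≥ n. -/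
open scoped BigOperators

noncomputable section

/-- A representation of the Virasoro algebra on a `ℂ`-vector space `M`, with the
central element `k` acting by the scalar `cc`. -/
structure VirRep (M : Type) [AddCommGroup M] [Module ℂ M] : Type where
  L : ℤ → M → M
  cc : ℂ
  L_linear : ∀ n : ℤ, IsLinearMap ℂ (L n)
  comm : ∀ (m n : ℤ) (x : M),
    L m (L n x) - L n (L m x) =
      ((m - n : ℤ) : ℂ) • L (m + n) x +
        (if m + n = 0 then ((m ^ 3 - m : ℤ) : ℂ) / 12 * cc else 0) • x

/-- Index of the standard PBW monomials `L(-p₁)⋯L(-p_t)L(-1)^q 𝟙` of a Verma module: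
a weakly decreasing list of integers `≥ 2` together with the exponent `q` of `L(-1)`. -/
def VirIdx : Type := {l : List ℕ // l.Chain' (· ≥ ·) ∧ ∀ a ∈ l, 2 ≤ a} × ℕ

/-- The level of a monomial index. -/
def VirIdx.level (i : VirIdx) : ℕ := i.1.1.sum + i.2

/-- The monomial index of `L(-1)^q 𝟙`. -/
def VirIdx.pure (q : ℕ) : VirIdx := (⟨[], List.isChain_nil, by simp⟩, q)

/-- The monomial `L(-p₁)⋯L(-p_t)L(-1)^q v`. -/
def VirRep.monomial {M : Type} [AddCommGroup M] [Module ℂ M] (R : VirRep M) (v : M)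
    (i : VirIdx) : M :=
  i.1.1.foldr (fun a acc => R.L (-(a : ℤ)) acc) ((fun x => R.L (-1) x)^[i.2] v)

/-- The Verma module `M(c,h)` for the Virasoro algebra: a representation with central
charge `c` and a highest-weight vector `hw` of weight `h` annihilated by the positive
part, such that the standard monomials form a basis. -/
structure VirVerma (M : Type) [AddCommGroup M] [Module ℂ M] (c h : ℂ)
    extends VirRep M : Type where
  cc_eq : cc = c
  hw : M
  hw_L0 : L 0 hw = h • hw
  hw_sing : ∀ n : ℤ, 0 < n → L n hw = 0
  bas : Module.Basis VirIdx ℂ M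
  bas_eq : ∀ i : VirIdx, bas i = toVirRep.monomial hw i

/-- The index `Ind(w)` of `w` (Definition 5.3 of the paper): the largest exponent `q`
of `L(-1)` occurring in the standard expression of `w`, with `Ind 0 = -1`. -/
def VirVerma.Ind {M : Type} [AddCommGroup M] [Module ℂ M] {c h : ℂ}
    (Vm : VirVerma M c h) (w : M) : ℤ :=
  WithBot.unbotD (-1) (((Vm.bas.repr w).support.image (fun i : VirIdx => (i.2 : ℤ))).max)

/-- A singular vector: annihilated by `L(n)` for all `n > 0`. -/
def IsSingular {M : Type} [AddCommGroup M] [Module ℂ M] (R : VirRep M) (w : M) : Prop :=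
  ∀ n : ℤ, 0 < n → R.L n w = 0

/-- Stability of a subspace under the Virasoro action. -/
def VirInvariant {M : Type} [AddCommGroup M] [Module ℂ M] (R : VirRep M)
    (S : Submodule ℂ M) : Prop :=
  ∀ (n : ℤ) (x : M), x ∈ S → R.L n x ∈ S

/-- The Vir-submodule generated by a subset. -/
def VirGen {M : Type} [AddCommGroup M] [Module ℂ M] (R : VirRep M) (s : Set M) :
    Submodule ℂ M :=
  sInf {U : Submodule ℂ M | VirInvariant R U ∧ s ⊆ U}

namespace VirProof

/-- sorting a list into weakly decreasing order -/
def sortL (l : List ℕ) : List ℕ := Multiset.sort (↑l : Multiset ℕ) (· ≥ ·)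

lemma sortL_perm (l : List ℕ) : (sortL l).Perm l := by
  rw [← Multiset.coe_eq_coe]; exact Multiset.sort_eq _ _

lemma sortL_sorted (l : List ℕ) : List.Pairwise (· ≥ ·) (sortL l) :=
  Multiset.pairwise_sort _ _

lemma sortL_chain' (l : List ℕ) : (sortL l).Chain' (· ≥ ·) :=
  List.isChain_iff_pairwise.mpr (sortL_sorted l)

lemma sortL_mem {l : List ℕ} {a : ℕ} : a ∈ sortL l ↔ a ∈ l := (sortL_perm l).mem_iff

lemma sortL_length (l : List ℕ) : (sortL l).length = l.length := (sortL_perm l).length_eq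

lemma sortL_eq_of_sorted {l : List ℕ} (hl : l.Chain' (· ≥ ·)) : sortL l = l :=
  List.Perm.eq_of_pairwise' (sortL_sorted l) (List.isChain_iff_pairwise.mp hl) (sortL_perm l)

lemma sortL_congr {l₁ l₂ : List ℕ} (hp : l₁.Perm l₂) : sortL l₁ = sortL l₂ := by
  unfold sortL; rw [Multiset.coe_eq_coe.mpr hp]

lemma sortL_cons_inj {m : ℕ} {l₁ l₂ : List ℕ} (h₁ : l₁.Chain' (· ≥ ·))
    (h₂ : l₂.Chain' (· ≥ ·)) (hs : sortL (m :: l₁) = sortL (m :: l₂)) : l₁ = l₂ := by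
  have hp : (m :: l₁).Perm (m :: l₂) := by
    have p1 := sortL_perm (m :: l₁)
    have p2 := sortL_perm (m :: l₂)
    exact (p1.symm.trans (hs ▸ p2))
  exact List.Perm.eq_of_pairwise' (List.isChain_iff_pairwise.mp h₁)
    (List.isChain_iff_pairwise.mp h₂) hp.cons_inv

/-- the sorted standard index built from a list -/
def sortIdx (l : List ℕ) (hl : ∀ a ∈ l, 2 ≤ a) (q : ℕ) : VirIdx :=
  (⟨sortL l, sortL_chain' l, fun a ha => hl a (sortL_mem.mp ha)⟩, q)

/-- number of inversions (out-of-order pairs for decreasing order) -/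
def inv : List ℕ → ℕ
  | [] => 0
  | x :: xs => xs.countP (fun y => decide (x < y)) + inv xs

lemma inv_le (l : List ℕ) : inv l ≤ l.length * l.length := by
  induction l with
  | nil => simp [inv]
  | cons x xs ih =>
    have h1 : xs.countP (fun y => decide (x < y)) ≤ xs.length := List.countP_le_length
    simp only [inv, List.length_cons]
    nlinarith

lemma inv_append (u X : List ℕ) :
    inv (u ++ X) = inv u + (u.map (fun x => X.countP (fun y => decide (x < y)))).sum + inv X := by
  induction u with
  | nil => simp [inv]
  | cons a u ih =>
    simp only [List.cons_append, inv, List.append_eq, List.countP_append, List.map_cons,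
      List.sum_cons, ih]
    ring

lemma inv_swap (u v : List ℕ) {a b : ℕ} (hab : a < b) :
    inv (u ++ b :: a :: v) + 1 = inv (u ++ a :: b :: v) := by
  rw [inv_append, inv_append]
  have hcount : ∀ x : ℕ, (b :: a :: v).countP (fun y => decide (x < y))
      = (a :: b :: v).countP (fun y => decide (x < y)) := by
    intro x; simp only [List.countP_cons]; ring
  have hmap : (u.map (fun x => (b :: a :: v).countP (fun y => decide (x < y)))).sum
      = (u.map (fun x => (a :: b :: v).countP (fun y => decide (x < y)))).sum := by
    congr 1; exact List.map_congr_left (fun x _ => hcount x)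
  rw [hmap]
  have h1 : inv (b :: a :: v) + 1 = inv (a :: b :: v) := by
    simp only [inv, List.countP_cons]
    have hb : decide (b < a) = false := by simp; omega
    have ha : decide (a < b) = true := by simp [hab]
    simp [hb, ha]; ring
  omega

lemma find_inversion : ∀ {l : List ℕ}, ¬ l.Chain' (· ≥ ·) →
    ∃ u a b v, l = u ++ a :: b :: v ∧ a < b := by
  intro l hl
  induction l with
  | nil => exact absurd List.isChain_nil hl
  | cons x xs ih =>
    cases xs with
    | nil => exact absurd (List.isChain_singleton x) hl
    | cons y ys =>
      simp only [List.Chain', List.isChain_cons_cons] at hl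
      push_neg at hl
      by_cases hxy : x ≥ y
      · obtain ⟨u, a, b, v, heq, hab⟩ := ih (hl hxy)
        exact ⟨x :: u, a, b, v, by rw [heq]; rfl, hab⟩
      · exact ⟨[], x, y, ys, rfl, by omega⟩


variable {M : Type} [AddCommGroup M] [Module ℂ M] {c h : ℂ}

/-- the (possibly unsorted) monomial `L(-a₁)⋯L(-a_t)L(-1)^q hw` -/
def rawMon (Vm : VirVerma M c h) (l : List ℕ) (q : ℕ) : M :=
  l.foldr (fun (a : ℕ) acc => Vm.L (-(a : ℤ)) acc) ((fun x => Vm.L (-1) x)^[q] Vm.hw)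

lemma rawMon_cons (Vm : VirVerma M c h) (a : ℕ) (l : List ℕ) (q : ℕ) :
    rawMon Vm (a :: l) q = Vm.L (-(a : ℤ)) (rawMon Vm l q) := rfl

lemma monomial_eq_rawMon (Vm : VirVerma M c h) (i : VirIdx) :
    Vm.toVirRep.monomial Vm.hw i = rawMon Vm i.1.1 i.2 := by
  unfold VirRep.monomial rawMon
  induction i.1.1 with
  | nil => rfl
  | cons a l ih => exact congrArg (Vm.L (-(a : ℤ))) ih

lemma bas_eq_rawMon (Vm : VirVerma M c h) (i : VirIdx) :
    Vm.bas i = rawMon Vm i.1.1 i.2 := (Vm.bas_eq i).trans (monomial_eq_rawMon Vm i)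

/-- the action as a linear map -/
def Lop (Vm : VirVerma M c h) (n : ℤ) : M →ₗ[ℂ] M := IsLinearMap.mk' _ (Vm.L_linear n)

lemma Lop_apply (Vm : VirVerma M c h) (n : ℤ) (x : M) : Lop Vm n x = Vm.L n x := rfl

lemma L_add (Vm : VirVerma M c h) (n : ℤ) (x y : M) :
    Vm.L n (x + y) = Vm.L n x + Vm.L n y := (Vm.L_linear n).map_add x y

lemma L_smul (Vm : VirVerma M c h) (n : ℤ) (a : ℂ) (x : M) :
    Vm.L n (a • x) = a • Vm.L n x := (Vm.L_linear n).map_smul a x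

lemma L_zero (Vm : VirVerma M c h) (n : ℤ) : Vm.L n (0 : M) = 0 := (Lop Vm n).map_zero

/-- commutation rewriting for two adjacent negative modes -/
lemma swap_merge (Vm : VirVerma M c h) (u : List ℕ) {a b : ℕ} (v : List ℕ) (q : ℕ)
    (ha : 1 ≤ a) (hb : 1 ≤ b) :
    rawMon Vm (u ++ a :: b :: v) q =
      rawMon Vm (u ++ b :: a :: v) q + (((b : ℤ) - a : ℤ) : ℂ) • rawMon Vm (u ++ (a + b) :: v) q := by
  induction u with
  | nil =>
    have hc := Vm.comm (-(a : ℤ)) (-(b : ℤ)) (rawMon Vm v q)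
    have hne : (-(a : ℤ)) + (-(b : ℤ)) ≠ 0 := by omega
    rw [if_neg hne, zero_smul, add_zero] at hc
    have h1 : rawMon Vm ([] ++ a :: b :: v) q = Vm.L (-(a:ℤ)) (Vm.L (-(b:ℤ)) (rawMon Vm v q)) := rfl
    have h2 : rawMon Vm ([] ++ b :: a :: v) q = Vm.L (-(b:ℤ)) (Vm.L (-(a:ℤ)) (rawMon Vm v q)) := rfl
    have h3 : rawMon Vm ([] ++ (a + b) :: v) q = Vm.L (-(a:ℤ) + -(b:ℤ)) (rawMon Vm v q) := by
      have hcast : -(a:ℤ) + -(b:ℤ) = -(((a + b : ℕ)) : ℤ) := by push_cast; ring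
      rw [hcast]; rfl
    rw [h1, h2, h3]
    have : ((-(a:ℤ) - -(b:ℤ) : ℤ) : ℂ) = (((b : ℤ) - a : ℤ) : ℂ) := by push_cast; ring
    rw [← this]
    linear_combination (norm := module) hc
  | cons x u ih =>
    have h1 : rawMon Vm ((x :: u) ++ a :: b :: v) q
        = Vm.L (-(x:ℤ)) (rawMon Vm (u ++ a :: b :: v) q) := rfl
    rw [h1, ih, L_add, L_smul]
    rfl

/-- span of standard basis monomials with `L(-1)`-exponent `q` and fewer than `t` parts -/
def lowSpan (Vm : VirVerma M c h) (q t : ℕ) : Submodule ℂ M :=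
  Submodule.span ℂ (Vm.bas '' {j : VirIdx | j.2 = q ∧ j.1.1.length < t})

lemma lowSpan_mono (Vm : VirVerma M c h) {q t₁ t₂ : ℕ} (ht : t₁ ≤ t₂) :
    lowSpan Vm q t₁ ≤ lowSpan Vm q t₂ :=
  Submodule.span_mono (Set.image_mono (fun j hj => ⟨hj.1, lt_of_lt_of_le hj.2 ht⟩))

/-- straightening: an unsorted monomial equals the sorted basis monomial plus
a combination of basis monomials with the same exponent and strictly fewer parts. -/
lemma straighten (Vm : VirVerma M c h) :
    ∀ (l : List ℕ) (hl : ∀ a ∈ l, 2 ≤ a) (q : ℕ),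
      rawMon Vm l q - Vm.bas (sortIdx l hl q) ∈ lowSpan Vm q l.length := by
  suffices H : ∀ (N : ℕ) (l : List ℕ) (hl : ∀ a ∈ l, 2 ≤ a) (q : ℕ),
      l.length * l.length * l.length + inv l < N →
      rawMon Vm l q - Vm.bas (sortIdx l hl q) ∈ lowSpan Vm q l.length by
    intro l hl q
    exact H (l.length * l.length * l.length + inv l + 1) l hl q (by omega)
  intro N
  induction N with
  | zero => intro l hl q hlt; omega
  | succ N ih =>
    intro l hl q hlt
    by_cases hs : l.Chain' (· ≥ ·)
    · have hsort : sortIdx l hl q = (⟨l, hs, hl⟩, q) := by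
        unfold sortIdx
        exact Prod.ext (Subtype.ext (sortL_eq_of_sorted hs)) rfl
      rw [hsort]; erw [Vm.bas_eq]
      have : Vm.toVirRep.monomial Vm.hw (⟨l, hs, hl⟩, q) = rawMon Vm l q := monomial_eq_rawMon Vm _
      rw [this, sub_self]
      exact Submodule.zero_mem _
    · obtain ⟨u, a, b, v, heq, hab⟩ := find_inversion hs
      subst heq
      have ha : 2 ≤ a := hl a (by simp)
      have hb : 2 ≤ b := hl b (by simp)
      -- the swapped and merged lists
      have hl' : ∀ x ∈ u ++ b :: a :: v, 2 ≤ x := by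
        intro x hx; apply hl; simp at hx ⊢; tauto
      have hl'' : ∀ x ∈ u ++ (a + b) :: v, 2 ≤ x := by
        intro x hx
        simp only [List.mem_append, List.mem_cons] at hx
        rcases hx with hx | hx | hx
        · exact hl x (by simp [hx])
        · subst hx; omega
        · exact hl x (by simp [hx])
      have hperm : (u ++ b :: a :: v).Perm (u ++ a :: b :: v) :=
        (List.Perm.swap a b v).append_left u
      have hlen' : (u ++ b :: a :: v).length = (u ++ a :: b :: v).length := hperm.length_eq
      have hlen'' : (u ++ (a + b) :: v).length + 1 = (u ++ a :: b :: v).length := by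
        simp; omega
      -- measures
      have hm1 : (u ++ b :: a :: v).length * (u ++ b :: a :: v).length * (u ++ b :: a :: v).length
          + inv (u ++ b :: a :: v) < N := by
        rw [hlen']
        have := inv_swap u v hab
        omega
      have hm2 : (u ++ (a + b) :: v).length * (u ++ (a + b) :: v).length * (u ++ (a + b) :: v).length
          + inv (u ++ (a + b) :: v) < N := by
        have h1 := inv_le (u ++ (a + b) :: v)
        set k := (u ++ (a + b) :: v).length with hk
        have hk1 : (u ++ a :: b :: v).length = k + 1 := hlen''.symm
        rw [hk1] at hlt
        have e : (k + 1) * (k + 1) * (k + 1) = k * k * k + 3 * (k * k) + 3 * k + 1 := by ring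
        rw [e] at hlt
        omega
      have H1 := ih (u ++ b :: a :: v) hl' q hm1
      have H2 := ih (u ++ (a + b) :: v) hl'' q hm2
      have hkey := swap_merge Vm u (a := a) (b := b) v q (by omega) (by omega)
      -- sort indices agree for l and the swapped list
      have hsi : sortIdx (u ++ b :: a :: v) hl' q = sortIdx (u ++ a :: b :: v) hl q := by
        unfold sortIdx
        exact Prod.ext (Subtype.ext (sortL_congr hperm)) rfl
      rw [hsi] at H1
      -- the sorted merged monomial lies in the low span
      have hbm : Vm.bas (sortIdx (u ++ (a + b) :: v) hl'' q) ∈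
          lowSpan Vm q (u ++ a :: b :: v).length := by
        apply Submodule.subset_span
        refine ⟨sortIdx (u ++ (a + b) :: v) hl'' q, ⟨rfl, ?_⟩, rfl⟩
        show (sortL (u ++ (a + b) :: v)).length < _
        rw [sortL_length]; omega
      have hmem2 : rawMon Vm (u ++ (a + b) :: v) q ∈ lowSpan Vm q (u ++ a :: b :: v).length := by
        have := Submodule.add_mem _ (lowSpan_mono Vm (by omega) H2) hbm
        simpa using this
      rw [hkey]
      have : rawMon Vm (u ++ b :: a :: v) q + (((b : ℤ) - a : ℤ) : ℂ) • rawMon Vm (u ++ (a + b) :: v) q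
          - Vm.bas (sortIdx (u ++ a :: b :: v) hl q)
          = (rawMon Vm (u ++ b :: a :: v) q - Vm.bas (sortIdx (u ++ a :: b :: v) hl q))
            + (((b : ℤ) - a : ℤ) : ℂ) • rawMon Vm (u ++ (a + b) :: v) q := by ring_nf; module
      rw [this]
      refine Submodule.add_mem _ ?_ (Submodule.smul_mem _ _ hmem2)
      have : lowSpan Vm q (u ++ b :: a :: v).length ≤ lowSpan Vm q (u ++ a :: b :: v).length :=
        lowSpan_mono Vm (by omega)
      exact this H1

/-- span of standard basis monomials with exponent at most `q` -/
def Fq (Vm : VirVerma M c h) (q : ℤ) : Submodule ℂ M :=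
  Submodule.span ℂ (Vm.bas '' {i : VirIdx | (i.2 : ℤ) ≤ q})

lemma Fq_mono (Vm : VirVerma M c h) {q₁ q₂ : ℤ} (hq : q₁ ≤ q₂) : Fq Vm q₁ ≤ Fq Vm q₂ :=
  Submodule.span_mono (Set.image_mono (fun i hi => le_trans hi hq))

lemma bas_mem_Fq (Vm : VirVerma M c h) {i : VirIdx} {q : ℤ} (hi : (i.2 : ℤ) ≤ q) :
    Vm.bas i ∈ Fq Vm q :=
  Submodule.subset_span ⟨i, hi, rfl⟩

lemma lowSpan_le_Fq (Vm : VirVerma M c h) {q' : ℕ} {t : ℕ} {q : ℤ} (hq : (q' : ℤ) ≤ q) :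
    lowSpan Vm q' t ≤ Fq Vm q :=
  Submodule.span_mono (Set.image_mono (fun j hj => by
    simp only [Set.mem_setOf_eq] at hj ⊢; rw [hj.1]; exact hq))

lemma rawMon_mem_Fq (Vm : VirVerma M c h) {l : List ℕ} (hl : ∀ a ∈ l, 2 ≤ a) {q' : ℕ}
    {q : ℤ} (hq : (q' : ℤ) ≤ q) : rawMon Vm l q' ∈ Fq Vm q := by
  have h1 := straighten Vm l hl q'
  have h2 : rawMon Vm l q' = (rawMon Vm l q' - Vm.bas (sortIdx l hl q')) + Vm.bas (sortIdx l hl q') := by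
    module
  rw [h2]
  exact Submodule.add_mem _ (lowSpan_le_Fq Vm hq h1) (bas_mem_Fq Vm hq)

/-- `L(-m)` for `m ≥ 2` preserves the exponent filtration -/
lemma Lneg_mem (Vm : VirVerma M c h) {m : ℕ} (hm : 2 ≤ m) {q : ℤ} {x : M}
    (hx : x ∈ Fq Vm q) : Vm.L (-(m : ℤ)) x ∈ Fq Vm q := by
  induction hx using Submodule.span_induction with
  | mem y hy =>
    obtain ⟨i, hi, rfl⟩ := hy
    rw [bas_eq_rawMon]
    have : Vm.L (-(m : ℤ)) (rawMon Vm i.1.1 i.2) = rawMon Vm (m :: i.1.1) i.2 := rfl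
    rw [this]
    exact rawMon_mem_Fq Vm (by
      intro a ha
      rcases List.mem_cons.mp ha with rfl | ha
      · exact hm
      · exact i.1.2.2 a ha) hi
  | zero => rw [L_zero]; exact Submodule.zero_mem _
  | add y z _ _ hy hz => rw [L_add]; exact Submodule.add_mem _ hy hz
  | smul a y _ hy => rw [L_smul]; exact Submodule.smul_mem _ _ hy

/-- `L(0)` acts on monomials by the weight -/
lemma L0_rawMon (Vm : VirVerma M c h) :
    ∀ (l : List ℕ), (∀ a ∈ l, 1 ≤ a) → ∀ q : ℕ,
      Vm.L 0 (rawMon Vm l q) = (h + (l.sum : ℂ) + (q : ℂ)) • rawMon Vm l q := by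
  intro l
  induction l with
  | nil =>
    intro _ q
    induction q with
    | zero =>
      have h0 : rawMon Vm [] 0 = Vm.hw := rfl
      rw [h0, Vm.hw_L0]; simp
    | succ p ihq =>
      have hit : rawMon Vm [] (p + 1) = Vm.L (-1) (rawMon Vm [] p) :=
        Function.iterate_succ_apply' (fun x => Vm.L (-1) x) p Vm.hw
      have hc := Vm.comm 0 (-1) (rawMon Vm [] p)
      norm_num at hc
      rw [hit]
      have h4 : Vm.L (-1) (Vm.L 0 (rawMon Vm [] p))
          = (h + (([] : List ℕ).sum : ℂ) + (p : ℂ)) • Vm.L (-1) (rawMon Vm [] p) := by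
        rw [ihq, L_smul]
      push_cast
      linear_combination (norm := module) hc + h4
  | cons a l ih =>
    intro hal q
    have ha : 1 ≤ a := hal a (by simp)
    have hc := Vm.comm 0 (-(a : ℤ)) (rawMon Vm l q)
    rw [if_neg (by omega : ¬((0 : ℤ) + -(a : ℤ) = 0)), zero_smul, add_zero] at hc
    have h2 : (0 : ℤ) + -(a : ℤ) = -(a : ℤ) := by ring
    rw [h2] at hc
    have h3 : ((0 - -(a : ℤ) : ℤ) : ℂ) = (a : ℂ) := by push_cast; ring
    rw [h3] at hc
    have h4 : Vm.L (-(a : ℤ)) (Vm.L 0 (rawMon Vm l q))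
        = (h + (l.sum : ℂ) + (q : ℂ)) • Vm.L (-(a : ℤ)) (rawMon Vm l q) := by
      rw [ih (fun x hx => hal x (by simp [hx])) q, L_smul]
    rw [rawMon_cons]
    have hsum : (((a :: l).sum : ℕ) : ℂ) = (a : ℂ) + (l.sum : ℂ) := by
      rw [List.sum_cons]; push_cast; ring
    rw [hsum]
    linear_combination (norm := module) hc + h4

/-- `L(0)` preserves the filtration -/
lemma L0_mem (Vm : VirVerma M c h) {q : ℤ} {x : M} (hx : x ∈ Fq Vm q) :
    Vm.L 0 x ∈ Fq Vm q := by
  induction hx using Submodule.span_induction with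
  | mem y hy =>
    obtain ⟨i, hi, rfl⟩ := hy
    rw [bas_eq_rawMon, L0_rawMon Vm i.1.1 (fun a ha => le_trans (by norm_num) (i.1.2.2 a ha)) i.2]
    exact Submodule.smul_mem _ _ (by rw [← bas_eq_rawMon]; exact bas_mem_Fq Vm hi)
  | zero => rw [L_zero]; exact Submodule.zero_mem _
  | add y z _ _ hy hz => rw [L_add]; exact Submodule.add_mem _ hy hz
  | smul a y _ hy => rw [L_smul]; exact Submodule.smul_mem _ _ hy

/-- `L(-1)` raises the filtration by one (on raw monomials) -/
lemma Lneg1_raw (Vm : VirVerma M c h) :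
    ∀ (l : List ℕ), (∀ a ∈ l, 2 ≤ a) → ∀ q : ℕ,
      Vm.L (-1) (rawMon Vm l q) ∈ Fq Vm ((q : ℤ) + 1) := by
  intro l
  induction l with
  | nil =>
    intro _ q
    have hit : Vm.L (-1) (rawMon Vm [] q) = rawMon Vm [] (q + 1) :=
      (Function.iterate_succ_apply' (fun x => Vm.L (-1) x) q Vm.hw).symm
    rw [hit]
    exact rawMon_mem_Fq Vm (by simp) (by push_cast; omega)
  | cons a l ih =>
    intro hal q
    have ha : 2 ≤ a := hal a (by simp)
    have hl : ∀ x ∈ l, 2 ≤ x := fun x hx => hal x (by simp [hx])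
    have hc := Vm.comm (-1) (-(a : ℤ)) (rawMon Vm l q)
    rw [if_neg (by omega : ¬((-1 : ℤ) + -(a : ℤ) = 0)), zero_smul, add_zero] at hc
    rw [rawMon_cons]
    have heq : Vm.L (-1) (Vm.L (-(a : ℤ)) (rawMon Vm l q))
        = Vm.L (-(a : ℤ)) (Vm.L (-1) (rawMon Vm l q))
          + ((-1 - -(a : ℤ) : ℤ) : ℂ) • Vm.L (-1 + -(a : ℤ)) (rawMon Vm l q) := by
      linear_combination (norm := module) hc
    rw [heq]
    refine Submodule.add_mem _ (Lneg_mem Vm ha (ih hl q)) (Submodule.smul_mem _ _ ?_)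
    have h5 : (-1 : ℤ) + -(a : ℤ) = -(((1 + a : ℕ)) : ℤ) := by push_cast; ring
    rw [h5]
    have h6 : Vm.L (-(((1 + a : ℕ)) : ℤ)) (rawMon Vm l q) = rawMon Vm ((1 + a) :: l) q := rfl
    rw [h6]
    refine Fq_mono Vm (by omega) (rawMon_mem_Fq Vm ?_ (le_refl _))
    intro x hx
    rcases List.mem_cons.mp hx with rfl | hx
    · omega
    · exact hl x hx

/-- `L(-1)` raises the filtration by one -/
lemma Lneg1_mem (Vm : VirVerma M c h) {q : ℤ} {x : M} (hx : x ∈ Fq Vm q) :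
    Vm.L (-1) x ∈ Fq Vm (q + 1) := by
  induction hx using Submodule.span_induction with
  | mem y hy =>
    obtain ⟨i, hi, rfl⟩ := hy
    rw [bas_eq_rawMon]
    have hi' : (i.2 : ℤ) ≤ q := hi
    exact Fq_mono Vm (by omega) (Lneg1_raw Vm i.1.1 i.1.2.2 i.2)
  | zero => rw [L_zero]; exact Submodule.zero_mem _
  | add y z _ _ hy hz => rw [L_add]; exact Submodule.add_mem _ hy hz
  | smul a y _ hy => rw [L_smul]; exact Submodule.smul_mem _ _ hy

/-- positive modes lower the exponent on pure `L(-1)` monomials -/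
lemma Lpos_pure (Vm : VirVerma M c h) :
    ∀ (p : ℕ) (m : ℤ), 1 ≤ m → Vm.L m (rawMon Vm [] p) ∈ Fq Vm ((p : ℤ) - 1) := by
  intro p
  induction p with
  | zero =>
    intro m hm
    have h0 : rawMon Vm [] 0 = Vm.hw := rfl
    rw [h0, Vm.hw_sing m (by omega)]
    exact Submodule.zero_mem _
  | succ p ihp =>
    intro m hm
    have hit : rawMon Vm [] (p + 1) = Vm.L (-1) (rawMon Vm [] p) :=
      Function.iterate_succ_apply' (fun x => Vm.L (-1) x) p Vm.hw
    rw [hit]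
    have hc := Vm.comm m (-1) (rawMon Vm [] p)
    have heq : Vm.L m (Vm.L (-1) (rawMon Vm [] p))
        = Vm.L (-1) (Vm.L m (rawMon Vm [] p))
          + ((m - -1 : ℤ) : ℂ) • Vm.L (m + -1) (rawMon Vm [] p)
          + (if m + -1 = 0 then ((m ^ 3 - m : ℤ) : ℂ) / 12 * Vm.cc else 0) • rawMon Vm [] p := by
      linear_combination (norm := module) hc
    rw [heq]
    have hg : ((p : ℤ) + 1 : ℤ) - 1 = (p : ℤ) := by ring
    have hgoal : (((p + 1 : ℕ) : ℤ)) - 1 = (p : ℤ) := by push_cast; ring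
    rw [hgoal]
    refine Submodule.add_mem _ (Submodule.add_mem _ ?_ (Submodule.smul_mem _ _ ?_)) ?_
    · have := Lneg1_mem Vm (ihp m hm)
      have he : (p : ℤ) - 1 + 1 = (p : ℤ) := by ring
      rwa [he] at this
    · rcases eq_or_lt_of_le hm with hm1 | hm2
      · have h7 : m + -1 = 0 := by omega
        rw [h7, L0_rawMon Vm [] (by simp) p]
        exact Submodule.smul_mem _ _ (rawMon_mem_Fq Vm (by simp) (le_refl _))
      · exact Fq_mono Vm (by omega) (ihp (m - 1) (by omega))
    · exact Submodule.smul_mem _ _ (rawMon_mem_Fq Vm (by simp) (le_refl _))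

/-- positive modes raise the filtration by at most one on raw monomials -/
lemma Lpos_raw (Vm : VirVerma M c h) :
    ∀ (l : List ℕ), (∀ a ∈ l, 2 ≤ a) → ∀ (q : ℕ) (m : ℤ), 1 ≤ m →
      Vm.L m (rawMon Vm l q) ∈ Fq Vm ((q : ℤ) + 1) := by
  intro l
  induction l with
  | nil =>
    intro _ q m hm
    exact Fq_mono Vm (by omega) (Lpos_pure Vm q m hm)
  | cons a l ih =>
    intro hal q m hm
    have ha : 2 ≤ a := hal a (by simp)
    have hl : ∀ x ∈ l, 2 ≤ x := fun x hx => hal x (by simp [hx])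
    have hX : rawMon Vm l q ∈ Fq Vm (q : ℤ) := rawMon_mem_Fq Vm hl (le_refl _)
    have hc := Vm.comm m (-(a : ℤ)) (rawMon Vm l q)
    have heq : Vm.L m (Vm.L (-(a : ℤ)) (rawMon Vm l q))
        = Vm.L (-(a : ℤ)) (Vm.L m (rawMon Vm l q))
          + ((m - -(a : ℤ) : ℤ) : ℂ) • Vm.L (m + -(a : ℤ)) (rawMon Vm l q)
          + (if m + -(a : ℤ) = 0 then ((m ^ 3 - m : ℤ) : ℂ) / 12 * Vm.cc else 0)
              • rawMon Vm l q := by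
      linear_combination (norm := module) hc
    rw [rawMon_cons, heq]
    refine Submodule.add_mem _ (Submodule.add_mem _ ?_ (Submodule.smul_mem _ _ ?_)) ?_
    · exact Lneg_mem Vm ha (ih hl q m hm)
    · -- cases on m - a
      rcases lt_trichotomy (m + -(a : ℤ)) 0 with hk | hk | hk
      · rcases eq_or_lt_of_le (by omega : m + -(a : ℤ) ≤ -1) with hk1 | hk2
        · rw [hk1]
          exact Lneg1_mem Vm hX
        · have h8 : m + -(a : ℤ) = -(((- (m + -(a : ℤ))).toNat : ℤ)) := by omega
          rw [h8]
          have h9 : 2 ≤ (-(m + -(a : ℤ))).toNat := by omega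
          have h10 : Vm.L (-(((-(m + -(a : ℤ))).toNat : ℕ) : ℤ)) (rawMon Vm l q)
              = rawMon Vm ((-(m + -(a : ℤ))).toNat :: l) q := rfl
          rw [h10]
          refine Fq_mono Vm (by omega) (rawMon_mem_Fq Vm ?_ (le_refl _))
          intro x hx
          rcases List.mem_cons.mp hx with rfl | hx
          · exact h9
          · exact hl x hx
      · rw [hk, L0_rawMon Vm l (fun x hx => by have := hl x hx; omega) q]
        exact Fq_mono Vm (by omega) (Submodule.smul_mem _ _ hX)
      · exact ih hl q (m + -(a : ℤ)) (by omega)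
    · exact Fq_mono Vm (by omega) (Submodule.smul_mem _ _ hX)

/-- any mode raises the exponent filtration by at most one -/
lemma Lany_mem (Vm : VirVerma M c h) (m : ℤ) {q : ℤ} {x : M} (hx : x ∈ Fq Vm q) :
    Vm.L m x ∈ Fq Vm (q + 1) := by
  rcases lt_trichotomy m 0 with hm | hm | hm
  · rcases eq_or_lt_of_le (by omega : m ≤ -1) with hm1 | hm2
    · rw [hm1]; exact Lneg1_mem Vm hx
    · have h8 : m = -(((-m).toNat : ℕ) : ℤ) := by omega
      rw [h8]
      exact Fq_mono Vm (by omega) (Lneg_mem Vm (by omega) hx)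
  · rw [hm]; exact Fq_mono Vm (by omega) (L0_mem Vm hx)
  · -- positive: span induction
    induction hx using Submodule.span_induction with
    | mem y hy =>
      obtain ⟨i, hi, rfl⟩ := hy
      have hi' : (i.2 : ℤ) ≤ q := hi
      rw [bas_eq_rawMon]
      exact Fq_mono Vm (by omega) (Lpos_raw Vm i.1.1 i.1.2.2 i.2 m (by omega))
    | zero => rw [L_zero]; exact Submodule.zero_mem _
    | add y z _ _ hy hz => rw [L_add]; exact Submodule.add_mem _ hy hz
    | smul a y _ hy => rw [L_smul]; exact Submodule.smul_mem _ _ hy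

lemma Ind_def (Vm : VirVerma M c h) (w : M) : Vm.Ind w =
    WithBot.unbotD (-1) (((Vm.bas.repr w).support.image (fun i : VirIdx => (i.2 : ℤ))).max) := rfl

lemma neg_one_le_Ind (Vm : VirVerma M c h) (w : M) : -1 ≤ Vm.Ind w := by
  rw [Ind_def]
  rcases hF : ((Vm.bas.repr w).support.image (fun i : VirIdx => (i.2 : ℤ))).max with _ | v
  · exact le_refl _
  · have hv : v ∈ (Vm.bas.repr w).support.image (fun i : VirIdx => (i.2 : ℤ)) :=
      Finset.mem_of_max hF
    obtain ⟨i, _, rfl⟩ := Finset.mem_image.mp hv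
    show (-1 : ℤ) ≤ (i.2 : ℤ)
    omega

lemma Ind_zero (Vm : VirVerma M c h) : Vm.Ind (0 : M) = -1 := by
  rw [Ind_def]; simp

lemma le_Ind_of_mem_supp (Vm : VirVerma M c h) {w : M} {i : VirIdx}
    (hi : i ∈ (Vm.bas.repr w).support) : (i.2 : ℤ) ≤ Vm.Ind w := by
  rw [Ind_def]
  have h1 : ((i.2 : ℤ) : WithBot ℤ) ≤ ((Vm.bas.repr w).support.image (fun i : VirIdx => (i.2 : ℤ))).max :=
    Finset.le_max (Finset.mem_image_of_mem _ hi)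
  rcases hF : ((Vm.bas.repr w).support.image (fun i : VirIdx => (i.2 : ℤ))).max with _ | v
  · rw [hF] at h1; exact absurd h1 (WithBot.not_coe_le_bot _)
  · rw [hF] at h1
    show (i.2 : ℤ) ≤ v
    exact WithBot.coe_le_coe.mp h1

lemma Ind_le_of_mem_Fq (Vm : VirVerma M c h) {w : M} {q : ℤ} (hq : -1 ≤ q)
    (hw : w ∈ Fq Vm q) : Vm.Ind w ≤ q := by
  have hsub : ↑(Vm.bas.repr w).support ⊆ {i : VirIdx | (i.2 : ℤ) ≤ q} :=
    Vm.bas.mem_span_image.mp hw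
  rw [Ind_def]
  rcases hF : ((Vm.bas.repr w).support.image (fun i : VirIdx => (i.2 : ℤ))).max with _ | v
  · exact hq
  · have hv : v ∈ (Vm.bas.repr w).support.image (fun i : VirIdx => (i.2 : ℤ)) :=
      Finset.mem_of_max hF
    obtain ⟨i, hi, rfl⟩ := Finset.mem_image.mp hv
    show (i.2 : ℤ) ≤ q
    exact hsub hi

lemma mem_Fq_Ind (Vm : VirVerma M c h) (w : M) : w ∈ Fq Vm (Vm.Ind w) :=
  Vm.bas.mem_span_image.mpr (fun i hi => le_Ind_of_mem_supp Vm (by simpa using hi))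

lemma repr_zero_of_mem_span (Vm : VirVerma M c h) {s : Set VirIdx} {x : M}
    (hx : x ∈ Submodule.span ℂ (Vm.bas '' s)) {j : VirIdx} (hj : j ∉ s) :
    Vm.bas.repr x j = 0 := by
  have hsub := Vm.bas.mem_span_image.mp hx
  by_contra hne
  exact hj (hsub (Finsupp.mem_support_iff.mpr hne))

lemma Ind_attained (Vm : VirVerma M c h) {w : M} (hw : w ≠ 0) :
    ∃ i ∈ (Vm.bas.repr w).support, (i.2 : ℤ) = Vm.Ind w := by
  have hsupp : (Vm.bas.repr w).support.Nonempty := by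
    rw [Finsupp.support_nonempty_iff]
    intro hc
    exact hw (by simpa using Vm.bas.repr.map_eq_zero_iff.mp hc)
  have hFne : ((Vm.bas.repr w).support.image (fun i : VirIdx => (i.2 : ℤ))).Nonempty :=
    hsupp.image _
  have hmax := Finset.max'_mem _ hFne
  obtain ⟨i, hi, hieq⟩ := Finset.mem_image.mp hmax
  refine ⟨i, hi, ?_⟩
  rw [Ind_def, ← Finset.coe_max' hFne]
  simpa using hieq

lemma part1 (Vm : VirVerma M c h) (m : ℤ) (hm : 2 ≤ m) (w : M) :
    Vm.Ind (Vm.L (-m) w) = Vm.Ind w := by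
  by_cases hw0 : w = 0
  · subst hw0; rw [L_zero, Ind_zero]
  set mn : ℕ := m.toNat with hmn
  have hmeq : -((mn : ℕ) : ℤ) = -m := by omega
  -- choose an index of maximal exponent and, among those, maximal length
  obtain ⟨i₁, hi₁, hq₁⟩ := Ind_attained Vm hw0
  set q : ℤ := Vm.Ind w with hq
  have hq0 : 0 ≤ q := le_trans (by omega) (hq₁.le)
  classical
  set T : Finset VirIdx := (Vm.bas.repr w).support.filter (fun i => (i.2 : ℤ) = q) with hT
  have hTne : T.Nonempty := ⟨i₁, Finset.mem_filter.mpr ⟨hi₁, hq₁⟩⟩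
  have hGne : (T.image (fun i : VirIdx => i.1.1.length)).Nonempty := hTne.image _
  have hmax'mem := Finset.max'_mem (T.image (fun i : VirIdx => i.1.1.length)) hGne
  obtain ⟨i₀, hi₀T, hlen₀⟩ := Finset.mem_image.mp hmax'mem
  have hi₀supp : i₀ ∈ (Vm.bas.repr w).support := (Finset.mem_filter.mp hi₀T).1
  have hi₀q : (i₀.2 : ℤ) = q := (Finset.mem_filter.mp hi₀T).2
  have hmaxlen : ∀ i ∈ T, i.1.1.length ≤ i₀.1.1.length := by
    intro i hi
    have h5 := Finset.le_max' (T.image (fun i : VirIdx => i.1.1.length)) i.1.1.length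
      (Finset.mem_image_of_mem _ hi)
    rw [← hlen₀] at h5
    exact h5
  have hcons : ∀ i : VirIdx, ∀ a ∈ mn :: i.1.1, 2 ≤ a := by
    intro i a ha
    rcases List.mem_cons.mp ha with rfl | ha
    · omega
    · exact i.1.2.2 a ha
  set j₀ : VirIdx := sortIdx (mn :: i₀.1.1) (hcons i₀) i₀.2 with hj₀
  have hj₀2 : j₀.2 = i₀.2 := rfl
  have hj₀len : j₀.1.1.length = i₀.1.1.length + 1 := by
    show (sortL (mn :: i₀.1.1)).length = _
    rw [sortL_length]; rfl
  -- the key coefficient computation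
  have key : ∀ i ∈ (Vm.bas.repr w).support,
      Vm.bas.repr (Vm.L (-m) (Vm.bas i)) j₀ = if i = i₀ then 1 else 0 := by
    intro i hi
    have hact : Vm.L (-m) (Vm.bas i) = rawMon Vm (mn :: i.1.1) i.2 := by
      rw [← hmeq, bas_eq_rawMon]; rfl
    have hdec := straighten Vm (mn :: i.1.1) (hcons i) i.2
    have hsplit : rawMon Vm (mn :: i.1.1) i.2
        = (rawMon Vm (mn :: i.1.1) i.2 - Vm.bas (sortIdx (mn :: i.1.1) (hcons i) i.2))
          + Vm.bas (sortIdx (mn :: i.1.1) (hcons i) i.2) := by module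
    have hlow : Vm.bas.repr (rawMon Vm (mn :: i.1.1) i.2
        - Vm.bas (sortIdx (mn :: i.1.1) (hcons i) i.2)) j₀ = 0 := by
      refine repr_zero_of_mem_span Vm hdec ?_
      intro hj
      obtain ⟨hj1, hj2⟩ := hj
      -- j₀.2 = i.2 and j₀ has length < (mn :: i.1.1).length = i.1.1.length + 1
      have h22 : i.2 = i₀.2 := hj1.symm.trans hj₀2
      have hq2 : (i.2 : ℤ) = q := by rw [h22]; exact hi₀q
      have hiT : i ∈ T := Finset.mem_filter.mpr ⟨hi, hq2⟩
      have := hmaxlen i hiT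
      have hlen2 : j₀.1.1.length < i.1.1.length + 1 := hj2
      omega
    rw [hact, hsplit, map_add, Finsupp.add_apply, hlow, zero_add, Vm.bas.repr_self,
      Finsupp.single_apply]
    by_cases hii : i = i₀
    · subst hii
      rw [if_pos, if_pos rfl]
      show sortIdx (mn :: i.1.1) (hcons i) i.2 = j₀
      rw [hj₀]
    · have hne2 : sortIdx (mn :: i.1.1) (hcons i) i.2 ≠ j₀ := by
        intro hcontra
        apply hii
        have h2nd' := congrArg (fun p : VirIdx => p.2) hcontra
        have h2nd : i.2 = i₀.2 := h2nd'
        have h1st' := congrArg (fun p : VirIdx => p.1.1) hcontra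
        have h1st : sortL (mn :: i.1.1) = sortL (mn :: i₀.1.1) := h1st'
        have h4 := sortL_cons_inj i.1.2.1 i₀.1.2.1 h1st
        exact Prod.ext (Subtype.ext h4) h2nd
      rw [if_neg hne2, if_neg hii]
  -- expand w in the basis
  have hw : w = ∑ i ∈ (Vm.bas.repr w).support, (Vm.bas.repr w) i • Vm.bas i := by
    conv_lhs => rw [← Vm.bas.repr.symm_apply_apply w]
    rw [Module.Basis.repr_symm_apply, Finsupp.linearCombination_apply, Finsupp.sum]
  have hLw : Vm.L (-m) w = ∑ i ∈ (Vm.bas.repr w).support,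
      (Vm.bas.repr w) i • Vm.L (-m) (Vm.bas i) := by
    conv_lhs => rw [hw]
    show Lop Vm (-m) _ = _
    rw [map_sum]
    exact Finset.sum_congr rfl (fun i _ => by rw [map_smul]; rfl)
  have hcoef : Vm.bas.repr (Vm.L (-m) w) j₀ = (Vm.bas.repr w) i₀ := by
    rw [hLw, map_sum, Finset.sum_apply']
    rw [Finset.sum_eq_single_of_mem i₀ hi₀supp]
    · rw [map_smul, Finsupp.smul_apply, key i₀ hi₀supp, if_pos rfl, smul_eq_mul, mul_one]
    · intro b hb hbne
      rw [map_smul, Finsupp.smul_apply, key b hb, if_neg hbne, smul_eq_mul, mul_zero]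
  -- conclude
  have hne : Vm.bas.repr (Vm.L (-m) w) j₀ ≠ 0 := by
    rw [hcoef]
    exact Finsupp.mem_support_iff.mp hi₀supp
  have hge : q ≤ Vm.Ind (Vm.L (-m) w) := by
    have h1 := le_Ind_of_mem_supp Vm (Finsupp.mem_support_iff.mpr hne)
    have h2 : (j₀.2 : ℤ) = q := by rw [hj₀2]; exact hi₀q
    omega
  have hle : Vm.Ind (Vm.L (-m) w) ≤ q := by
    refine Ind_le_of_mem_Fq Vm (by omega) ?_
    rw [← hmeq]
    exact Lneg_mem Vm (by omega) (mem_Fq_Ind Vm w)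
  omega

lemma basis_expand (Vm : VirVerma M c h) (x : M) :
    x = ∑ i ∈ (Vm.bas.repr x).support, (Vm.bas.repr x) i • Vm.bas i := by
  conv_lhs => rw [← Vm.bas.repr.symm_apply_apply x]
  rw [Module.Basis.repr_symm_apply, Finsupp.linearCombination_apply, Finsupp.sum]

lemma eigen_zero (Vm : VirVerma M c h) {x : M} {lam : ℂ}
    (hx : Vm.L 0 x = lam • x)
    (hlam : ∀ i : VirIdx, h + ((i.1.1.sum : ℂ) + (i.2 : ℂ)) ≠ lam) : x = 0 := by
  classical
  have hL0 : Vm.L 0 x = ∑ i ∈ (Vm.bas.repr x).support,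
      ((Vm.bas.repr x) i * (h + ((i.1.1.sum : ℂ) + (i.2 : ℂ)))) • Vm.bas i := by
    conv_lhs => rw [basis_expand Vm x]
    show Lop Vm 0 _ = _
    rw [map_sum]
    refine Finset.sum_congr rfl (fun i _ => ?_)
    rw [map_smul]
    show (Vm.bas.repr x) i • Vm.L 0 (Vm.bas i) = _
    rw [bas_eq_rawMon, L0_rawMon Vm i.1.1 (fun a ha => by have := i.1.2.2 a ha; omega) i.2,
      smul_smul, ← bas_eq_rawMon]
    congr 1
    ring
  have hco : ∀ j : VirIdx,
      (Vm.bas.repr x) j * (h + ((j.1.1.sum : ℂ) + (j.2 : ℂ))) = lam * (Vm.bas.repr x) j := by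
    intro j
    have e1 : Vm.bas.repr (Vm.L 0 x) j = lam * (Vm.bas.repr x) j := by
      rw [hx, map_smul, Finsupp.smul_apply, smul_eq_mul]
    have e2 : Vm.bas.repr (Vm.L 0 x) j
        = (Vm.bas.repr x) j * (h + ((j.1.1.sum : ℂ) + (j.2 : ℂ))) := by
      rw [hL0, map_sum, Finset.sum_apply']
      by_cases hj : j ∈ (Vm.bas.repr x).support
      · rw [Finset.sum_eq_single_of_mem j hj]
        · rw [map_smul, Finsupp.smul_apply, Vm.bas.repr_self, Finsupp.single_apply,
            if_pos rfl, smul_eq_mul, mul_one]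
        · intro b _ hbne
          rw [map_smul, Finsupp.smul_apply, Vm.bas.repr_self, Finsupp.single_apply,
            if_neg hbne, smul_eq_mul, mul_zero]
      · rw [Finset.sum_eq_zero, Finsupp.notMem_support_iff.mp hj, zero_mul]
        intro b hb
        have hbne : b ≠ j := fun hbj => hj (hbj ▸ hb)
        rw [map_smul, Finsupp.smul_apply, Vm.bas.repr_self, Finsupp.single_apply,
          if_neg hbne, smul_eq_mul, mul_zero]
    exact e2.symm.trans e1
  have hzero : ∀ j : VirIdx, (Vm.bas.repr x) j = 0 := by
    intro j
    by_contra h7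
    apply hlam j
    have h6 := hco j
    rw [mul_comm lam _] at h6
    exact mul_left_cancel₀ h7 h6
  exact Vm.bas.repr.map_eq_zero_iff.mp (Finsupp.ext hzero)

/-- vanishing above the level -/
lemma vanish (Vm : VirVerma M c h) {l : List ℕ} (hl : ∀ a ∈ l, 2 ≤ a) {n : ℕ} {m : ℤ}
    (hm : ((l.sum + n : ℕ) : ℤ) < m) : Vm.L m (rawMon Vm l n) = 0 := by
  set x := rawMon Vm l n with hxdef
  have hw0 : Vm.L 0 x = (h + ((l.sum : ℂ) + (n : ℂ))) • x := by
    rw [hxdef, L0_rawMon Vm l (fun a ha => by have := hl a ha; omega) n]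
    congr 1; ring
  have hmne : (0 : ℤ) + m ≠ 0 := by omega
  have hc := Vm.comm 0 m x
  rw [if_neg hmne, zero_smul, add_zero] at hc
  have hzm : (0 : ℤ) + m = m := by ring
  rw [hzm] at hc
  -- hc : L 0 (L m x) - L m (L 0 x) = ((0 - m : ℤ) : ℂ) • L m x
  have hLm : Vm.L 0 (Vm.L m x) = (h + ((l.sum : ℂ) + (n : ℂ)) - (m : ℂ)) • Vm.L m x := by
    have h8 : Vm.L m (Vm.L 0 x) = (h + ((l.sum : ℂ) + (n : ℂ))) • Vm.L m x := by
      rw [hw0, L_smul]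
    have h9 : ((0 - m : ℤ) : ℂ) = -(m : ℂ) := by push_cast; ring
    rw [h9] at hc
    linear_combination (norm := module) hc + h8
  refine eigen_zero Vm hLm ?_
  intro i hcontra
  have h12 : (i.1.1.sum : ℤ) + (i.2 : ℤ) = (l.sum : ℤ) + (n : ℤ) - m := by
    have h11 : (((i.1.1.sum : ℤ) + (i.2 : ℤ) : ℤ) : ℂ) = (((l.sum : ℤ) + (n : ℤ) - m : ℤ) : ℂ) := by
      push_cast [-Nat.cast_list_sum]
      linear_combination hcontra
    exact_mod_cast h11
  omega

/-- the index of an unsorted monomial is exactly its `L(-1)`-exponent -/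
lemma Ind_rawMon (Vm : VirVerma M c h) {l : List ℕ} (hl : ∀ a ∈ l, 2 ≤ a) (n : ℕ) :
    Vm.Ind (rawMon Vm l n) = (n : ℤ) := by
  classical
  have hle : Vm.Ind (rawMon Vm l n) ≤ (n : ℤ) :=
    Ind_le_of_mem_Fq Vm (by omega) (rawMon_mem_Fq Vm hl (le_refl _))
  have hone : Vm.bas.repr (rawMon Vm l n) (sortIdx l hl n) = 1 := by
    have hdec := straighten Vm l hl n
    have hlow : Vm.bas.repr (rawMon Vm l n - Vm.bas (sortIdx l hl n)) (sortIdx l hl n) = 0 := by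
      refine repr_zero_of_mem_span Vm hdec ?_
      intro hj
      obtain ⟨_, hj2⟩ := hj
      have : (sortL l).length < l.length := hj2
      rw [sortL_length] at this
      omega
    have hsplit : rawMon Vm l n
        = (rawMon Vm l n - Vm.bas (sortIdx l hl n)) + Vm.bas (sortIdx l hl n) := by module
    rw [hsplit, map_add, Finsupp.add_apply, hlow, zero_add, Vm.bas.repr_self,
      Finsupp.single_apply, if_pos rfl]
  have hmem : sortIdx l hl n ∈ (Vm.bas.repr (rawMon Vm l n)).support :=
    Finsupp.mem_support_iff.mpr (by rw [hone]; norm_num)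
  have hge := le_Ind_of_mem_supp Vm hmem
  have : ((sortIdx l hl n).2 : ℤ) = (n : ℤ) := rfl
  omega

end VirProof

/-- Proposition 5.4 of the paper.
Let `W = M(c,h)` be a Verma module for the Virasoro algebra, with `Ind` the index of
the standard expression.  Then:
(1) for every `m ≥ 2` and `w ∈ W`, `Ind(L(-m)w) = Ind(w)`;
(2) for fixed `n ∈ ℤ₊` and `n₁,…,n_s ≥ 2` (not necessarily decreasing),
`Ind(L(m)L(-n₁)⋯L(-n_s)L(-1)^n 𝟙) ≤ n+1` for all `m ∈ ℤ`, with equality for only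
finitely many `m`; moreover among integers `m ≥ -1` only finitely many satisfy
`Ind(L(m)L(-n₁)⋯L(-n_s)L(-1)^n 𝟙) ≥ n`. -/
theorem virasoro_index_estimates
    {M : Type} [AddCommGroup M] [Module ℂ M] (c h : ℂ) (Vm : VirVerma M c h) :
    (∀ m : ℤ, 2 ≤ m → ∀ w : M, Vm.Ind (Vm.L (-m) w) = Vm.Ind w) ∧
    (∀ n : ℕ, 1 ≤ n → ∀ ns : List ℕ, (∀ a ∈ ns, 2 ≤ a) →
      ∀ w : M, w = ns.foldr (fun (a : ℕ) acc => Vm.L (-(a : ℤ)) acc)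
          ((fun x => Vm.L (-1) x)^[n] Vm.hw) →
        (∀ m : ℤ, Vm.Ind (Vm.L m w) ≤ (n : ℤ) + 1) ∧
        {m : ℤ | Vm.Ind (Vm.L m w) = (n : ℤ) + 1}.Finite ∧
        {m : ℤ | -1 ≤ m ∧ (n : ℤ) ≤ Vm.Ind (Vm.L m w)}.Finite) := by
  constructor
  · exact VirProof.part1 Vm
  · intro n hn ns hns w hw
    have hw' : w = VirProof.rawMon Vm ns n := hw
    subst hw'
    refine ⟨?_, ?_, ?_⟩
    · intro m
      refine VirProof.Ind_le_of_mem_Fq Vm (by omega) ?_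
      exact VirProof.Lany_mem Vm m (VirProof.rawMon_mem_Fq Vm hns (le_refl _))
    · refine Set.Finite.subset (Set.finite_Icc (-1 : ℤ) ((ns.sum + n : ℕ) : ℤ)) ?_
      intro m hm
      simp only [Set.mem_setOf_eq] at hm
      simp only [Set.mem_Icc]
      constructor
      · by_contra hneg
        push_neg at hneg
        have h2 : 2 ≤ -m := by omega
        have h3 := VirProof.part1 Vm (-m) h2 (VirProof.rawMon Vm ns n)
        rw [neg_neg] at h3
        rw [VirProof.Ind_rawMon Vm hns n] at h3
        omega
      · by_contra hgt
        push_neg at hgt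
        have h0 := VirProof.vanish Vm hns (n := n) (m := m) (by omega)
        rw [h0, VirProof.Ind_zero] at hm
        omega
    · refine Set.Finite.subset (Set.finite_Icc (-1 : ℤ) ((ns.sum + n : ℕ) : ℤ)) ?_
      intro m hm
      obtain ⟨hm1, hm2⟩ := hm
      refine ⟨hm1, ?_⟩
      by_contra hgt
      push_neg at hgt
      have h0 := VirProof.vanish Vm hns (n := n) (m := m) (by omega)
      rw [h0, VirProof.Ind_zero] at hm2
      omega
end
end

section
/- Let W = M(c,h) be a Virasoro Verma module in a Feigin–Fuchs block of type (a), (b) or (c), W_2 = M(c,h_1) the submodule generated by a singular vector s_{h_1} of level N, W_1 the complementary subspace and π_{W_2}: W → W_2 the projection along W_1. For w_1 ∈ W_1, let Y_W(ω,x)w_1 = Σ_{m∈ℤ} L(m)w_1 x^{-m-2}. Then π_{W_2} Y_W(ω,x)w_1 is a finite Laurent polynomial in W_2[x,x^{-1}]; moreover π_{W_2} Y_W(ω,x)w_1 ≠ 0 only when Ind(w_1) = N−1. -/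
open scoped BigOperators

noncomputable section

namespace VirAux

variable {M : Type} [AddCommGroup M] [Module ℂ M] {c h : ℂ} (Vm : VirVerma M c h)

/-- `L m` as a linear map. -/
def Lm (m : ℤ) : M →ₗ[ℂ] M := IsLinearMap.mk' _ (Vm.L_linear m)

@[simp] lemma Lm_apply (m : ℤ) (x : M) : Lm Vm m x = Vm.L m x := rfl

/-- Span of standard monomials of level `ℓ` and `L(-1)`-exponent at most `Q`. -/
def F (ℓ : ℤ) (Q : ℕ) : Submodule ℂ M :=
  Submodule.span ℂ {v : M | ∃ j : VirIdx, (j.level : ℤ) = ℓ ∧ j.2 ≤ Q ∧ v = Vm.bas j}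

lemma bas_mem_F {j : VirIdx} {ℓ : ℤ} {Q : ℕ} (h1 : (j.level : ℤ) = ℓ) (h2 : j.2 ≤ Q) :
    Vm.bas j ∈ F Vm ℓ Q :=
  Submodule.subset_span ⟨j, h1, h2, rfl⟩

lemma F_mono {ℓ : ℤ} {Q Q' : ℕ} (hQ : Q ≤ Q') : F Vm ℓ Q ≤ F Vm ℓ Q' :=
  Submodule.span_mono (by rintro v ⟨j, h1, h2, rfl⟩; exact ⟨j, h1, h2.trans hQ, rfl⟩)

/-- Apply a linear map to an element of a span. -/
lemma apply_mem_of_mem_span (f : M →ₗ[ℂ] M) {s : Set M} {T : Submodule ℂ M}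
    (hs : ∀ v ∈ s, f v ∈ T) {x : M} (hx : x ∈ Submodule.span ℂ s) : f x ∈ T :=
  (Submodule.map_span_le f s T).2 hs (Submodule.mem_map_of_mem hx)

lemma apply_F {a : ℤ} {ℓ : ℤ} {Q : ℕ} {T : Submodule ℂ M}
    (hs : ∀ j : VirIdx, (j.level : ℤ) = ℓ → j.2 ≤ Q → Vm.L a (Vm.bas j) ∈ T)
    {x : M} (hx : x ∈ F Vm ℓ Q) : Vm.L a x ∈ T := by
  refine apply_mem_of_mem_span (Lm Vm a) ?_ hx
  rintro v ⟨j, h1, h2, rfl⟩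
  exact hs j h1 h2

lemma monomial_cons (l : List ℕ) (hl : (l.Chain' (· ≥ ·) ∧ ∀ a ∈ l, 2 ≤ a))
    (a : ℕ) (hal : ((a :: l).Chain' (· ≥ ·) ∧ ∀ b ∈ a :: l, 2 ≤ b)) (q : ℕ) :
    Vm.bas ((⟨a :: l, hal⟩, q) : VirIdx) = Vm.L (-(a : ℤ)) (Vm.bas ((⟨l, hl⟩, q) : VirIdx)) := by
  rw [Vm.bas_eq ((⟨a :: l, hal⟩, q) : VirIdx), Vm.bas_eq ((⟨l, hl⟩, q) : VirIdx)]
  rfl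

lemma monomial_one (l : List ℕ) (hl : (l.Chain' (· ≥ ·) ∧ ∀ a ∈ l, 2 ≤ a)) (q : ℕ)
    (hnil : l = []) :
    Vm.bas ((⟨l, hl⟩, q + 1) : VirIdx) = Vm.L (-1) (Vm.bas ((⟨l, hl⟩, q) : VirIdx)) := by
  subst hnil
  rw [Vm.bas_eq ((⟨[], hl⟩, q + 1) : VirIdx), Vm.bas_eq ((⟨[], hl⟩, q) : VirIdx)]
  show (fun x => Vm.L (-1) x)^[q + 1] Vm.hw = Vm.L (-1) ((fun x => Vm.L (-1) x)^[q] Vm.hw)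
  rw [Function.iterate_succ_apply']

end VirAux

namespace VirAux

variable {M : Type} [AddCommGroup M] [Module ℂ M] {c h : ℂ} (Vm : VirVerma M c h)

lemma neg_mem : ∀ (Lv : ℕ) (a : ℕ), 1 ≤ a → ∀ i : VirIdx, i.level + a = Lv →
    Vm.L (-(a : ℤ)) (Vm.bas i) ∈
      F Vm ((i.level : ℤ) + a) (i.2 + if a = 1 then 1 else 0) := by
  intro Lv
  induction Lv using Nat.strong_induction_on with
  | _ Lv ihL =>
  suffices H : ∀ b : ℕ, ∀ a : ℕ, 1 ≤ a → ∀ i : VirIdx, i.level = b → i.level + a = Lv →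
      Vm.L (-(a : ℤ)) (Vm.bas i) ∈
        F Vm ((i.level : ℤ) + a) (i.2 + if a = 1 then 1 else 0) by
    intro a ha i hLv
    exact H i.level a ha i rfl hLv
  intro b
  induction b using Nat.strong_induction_on with
  | _ b ihb =>
  intro a ha i hb hLv
  obtain ⟨⟨l, hl⟩, q⟩ := i
  cases l with
  | nil =>
    have hlev : VirIdx.level ((⟨[], hl⟩, q) : VirIdx) = q := by simp [VirIdx.level]
    rcases eq_or_lt_of_le ha with h1 | h2
    · -- a = 1
      have ha1 : a = 1 := h1.symm
      subst ha1
      rw [if_pos rfl]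
      have hcast : (-((1 : ℕ) : ℤ)) = -1 := by norm_num
      rw [hcast, ← monomial_one Vm [] hl q rfl]
      exact bas_mem_F Vm (by push_cast [VirIdx.level, List.sum_cons, List.sum_nil]; ring) (le_refl _)
    · -- 2 ≤ a
      have ha2 : 2 ≤ a := h2
      rw [if_neg (by omega)]
      have hal : ((a :: ([] : List ℕ)).Chain' (· ≥ ·) ∧ ∀ b ∈ a :: ([] : List ℕ), 2 ≤ b) := by
        constructor
        · exact List.isChain_singleton a
        · intro x hx
          rcases List.mem_singleton.1 hx with rfl
          omega
      rw [← monomial_cons Vm [] hl a hal q]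
      exact bas_mem_F Vm (by push_cast [VirIdx.level, List.sum_cons, List.sum_nil]; ring) (le_refl _)
  | cons p l' =>
    have hp2 : 2 ≤ p := hl.2 p (List.mem_cons_self (a := p) (l := l'))
    have hl' : (l'.Chain' (· ≥ ·) ∧ ∀ x ∈ l', 2 ≤ x) :=
      ⟨hl.1.tail, fun x hx => hl.2 x (List.mem_cons_of_mem p hx)⟩
    set i' : VirIdx := (⟨l', hl'⟩, q) with hi'
    have hq2 : i'.2 = q := rfl
    have hbas : Vm.bas ((⟨p :: l', hl⟩, q) : VirIdx) = Vm.L (-(p : ℤ)) (Vm.bas i') :=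
      monomial_cons Vm l' hl' p hl q
    have hblev : VirIdx.level ((⟨p :: l', hl⟩, q) : VirIdx) = p + i'.level := by
      simp [VirIdx.level, hi', List.sum_cons]; omega
    by_cases hap : p ≤ a
    · -- direct: a :: p :: l' is standard
      rw [if_neg (by omega)]
      have hal : ((a :: p :: l').Chain' (· ≥ ·) ∧ ∀ x ∈ a :: p :: l', 2 ≤ x) := by
        refine ⟨List.isChain_cons_cons.2 ⟨hap, hl.1⟩, ?_⟩
        intro x hx
        rcases List.mem_cons.1 hx with rfl | hx
        · omega
        · exact hl.2 x hx
      rw [← monomial_cons Vm (p :: l') hl a hal q]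
      refine bas_mem_F Vm ?_ (le_refl _)
      push_cast [VirIdx.level, List.sum_cons, List.sum_nil]; ring
    · -- swap: a < p
      push_neg at hap
      have hne : (-(a : ℤ)) + (-(p : ℤ)) ≠ 0 := by omega
      have hc := Vm.comm (-(a : ℤ)) (-(p : ℤ)) (Vm.bas i')
      rw [if_neg hne, zero_smul, add_zero] at hc
      have hkey := eq_add_of_sub_eq hc
      rw [hbas, hkey]
      refine Submodule.add_mem _ ?_ ?_
      · -- L(-(a+p)) x
        refine Submodule.smul_mem _ _ ?_
        have hsm : (-(a : ℤ)) + (-(p : ℤ)) = -(((a + p : ℕ) : ℤ)) := by push_cast; ring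
        rw [hsm]
        have hmem := ihb i'.level (by omega) (a + p) (by omega) i' rfl (by omega)
        rw [if_neg (by omega)] at hmem
        have hrw : ((i'.level : ℤ) + (a + p : ℕ)) =
            VirIdx.level ((⟨p :: l', hl⟩, q) : VirIdx) + a := by
          push_cast [hblev]; ring
        rw [hrw] at hmem
        exact F_mono Vm (by omega) hmem

      · -- L(-p) (L(-a) x)
        have hA : Vm.L (-(a : ℤ)) (Vm.bas i') ∈
            F Vm ((i'.level : ℤ) + a) (q + if a = 1 then 1 else 0) := by
          have hlt : i'.level + a < Lv := by omega
          exact ihL (i'.level + a) hlt a ha i' rfl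
        refine apply_F Vm ?_ hA
        intro j hj1 hj2
        have hjnat : j.level = i'.level + a := by exact_mod_cast hj1
        have hmem := ihb j.level (by omega) p (by omega) j rfl (by omega)
        rw [if_neg (by omega)] at hmem
        have hrw : ((j.level : ℤ) + p) = VirIdx.level ((⟨p :: l', hl⟩, q) : VirIdx) + a := by
          push_cast [hblev, hjnat]; ring
        rw [hrw] at hmem
        exact F_mono Vm (by omega) hmem
end VirAux

namespace VirAux

variable {M : Type} [AddCommGroup M] [Module ℂ M] {c h : ℂ} (Vm : VirVerma M c h)

lemma pos_mem : ∀ (sz : ℕ) (i : VirIdx), i.1.1.length + i.2 = sz → ∀ m : ℕ,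
    Vm.L (m : ℤ) (Vm.bas i) ∈ F Vm ((VirIdx.level i : ℤ) - m) (i.2 + 1) := by
  intro sz
  induction sz using Nat.strong_induction_on with
  | _ sz ih =>
  intro i hsz m
  obtain ⟨⟨l, hl⟩, q⟩ := i
  cases l with
  | nil =>
    have hlev : VirIdx.level ((⟨[], hl⟩, q) : VirIdx) = q := by
      simp [VirIdx.level]
    cases q with
    | zero =>
      have hhw : Vm.bas ((⟨[], hl⟩, 0) : VirIdx) = Vm.hw := by
        rw [Vm.bas_eq ((⟨[], hl⟩, 0) : VirIdx)]; rfl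
      rcases Nat.eq_zero_or_pos m with hm | hm
      · subst hm
        rw [hhw]
        have h0 : ((0 : ℕ) : ℤ) = 0 := by norm_num
        rw [h0, Vm.hw_L0]
        refine Submodule.smul_mem _ _ ?_
        rw [← hhw]
        exact bas_mem_F Vm (by rw [hlev]; norm_num) (by omega)
      · rw [hhw, Vm.hw_sing m (by exact_mod_cast hm)]
        exact Submodule.zero_mem _
    | succ q' =>
      set x : M := Vm.bas ((⟨[], hl⟩, q') : VirIdx) with hx
      have heq : Vm.bas ((⟨[], hl⟩, q' + 1) : VirIdx) = Vm.L (-1) x :=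
        monomial_one Vm [] hl q' rfl
      have hxlev : VirIdx.level ((⟨[], hl⟩, q') : VirIdx) = q' := by
        simp [VirIdx.level]
      have hc := Vm.comm (m : ℤ) (-1) x
      have hz : (if (m : ℤ) + (-1) = 0 then (((m : ℤ) ^ 3 - (m : ℤ) : ℤ) : ℂ) / 12 * Vm.cc
          else 0) = 0 := by
        split_ifs with hm1
        · have hm' : (m : ℤ) = 1 := by omega
          rw [hm']; norm_num
        · rfl
      rw [hz, zero_smul, add_zero] at hc
      have hkey := eq_add_of_sub_eq hc
      rw [heq, hkey]
      refine Submodule.add_mem _ ?_ ?_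
      · -- ((m - (-1)) : ℂ) • L(m + (-1)) x
        refine Submodule.smul_mem _ _ ?_
        rcases Nat.eq_zero_or_pos m with hm | hm
        · subst hm
          have hrm : ((0 : ℕ) : ℤ) + (-1) = -((1 : ℕ) : ℤ) := by norm_num
          rw [hrm]
          have hmem := neg_mem Vm (q' + 1) 1 le_rfl ((⟨[], hl⟩, q') : VirIdx)
            (by rw [hxlev])
          rw [if_pos rfl] at hmem
          have hle : ((VirIdx.level ((⟨[], hl⟩, q') : VirIdx) : ℤ) + (1 : ℕ)) =
              ((VirIdx.level ((⟨[], hl⟩, q' + 1) : VirIdx) : ℤ) - ((0 : ℕ) : ℤ)) := by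
            rw [hxlev, hlev]; push_cast; ring
          rw [hle] at hmem
          exact F_mono Vm (by omega) hmem
        · have hrm : (m : ℤ) + (-1) = ((m - 1 : ℕ) : ℤ) := by omega
          rw [hrm]
          have hmem := ih (0 + q') (by simpa using by omega) ((⟨[], hl⟩, q') : VirIdx)
            (by simp) (m - 1)
          have hle : ((VirIdx.level ((⟨[], hl⟩, q') : VirIdx) : ℤ) - ((m - 1 : ℕ) : ℤ)) =
              ((VirIdx.level ((⟨[], hl⟩, q' + 1) : VirIdx) : ℤ) - (m : ℤ)) := by
            rw [hxlev, hlev]; omega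
          rw [hle] at hmem
          exact F_mono Vm (by omega) hmem
      · -- L(-1) (L m x)
        have hmem := ih (0 + q') (by simpa using by omega) ((⟨[], hl⟩, q') : VirIdx)
          (by simp) m
        refine apply_F Vm ?_ hmem
        intro j hj1 hj2
        have hmem2 := neg_mem Vm (j.level + 1) 1 le_rfl j rfl
        rw [if_pos rfl] at hmem2
        have hle : ((j.level : ℤ) + ((1 : ℕ) : ℤ)) =
            ((VirIdx.level ((⟨[], hl⟩, q' + 1) : VirIdx) : ℤ) - (m : ℤ)) := by
          rw [hj1, hxlev, hlev]; push_cast; ring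
        rw [hle] at hmem2
        exact F_mono Vm (by omega) hmem2
  | cons p l' =>
    have hp2 : 2 ≤ p := hl.2 p (List.mem_cons_self (a := p) (l := l'))
    have hl' : (l'.Chain' (· ≥ ·) ∧ ∀ y ∈ l', 2 ≤ y) :=
      ⟨hl.1.tail, fun y hy => hl.2 y (List.mem_cons_of_mem p hy)⟩
    set i' : VirIdx := (⟨l', hl'⟩, q) with hi'
    have hq2 : i'.2 = q := rfl
    set x : M := Vm.bas i' with hx
    have heq : Vm.bas ((⟨p :: l', hl⟩, q) : VirIdx) = Vm.L (-(p : ℤ)) x :=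
      monomial_cons Vm l' hl' p hl q
    have hblev : VirIdx.level ((⟨p :: l', hl⟩, q) : VirIdx) = p + i'.level := by
      simp [VirIdx.level, hi', List.sum_cons]; omega
    have hszi : i'.1.1.length + i'.2 < sz := by
      simp only [hi'] at hsz ⊢
      simp only [List.length_cons] at hsz
      omega
    have hc := Vm.comm (m : ℤ) (-(p : ℤ)) x
    have hkey := eq_add_of_sub_eq hc
    rw [heq, hkey]
    refine Submodule.add_mem _ (Submodule.add_mem _ ?_ ?_) ?_
    · -- ((m - (-p)) : ℂ) • L(m + (-p)) x
      refine Submodule.smul_mem _ _ ?_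
      by_cases hpm : p ≤ m
      · have hrm : (m : ℤ) + (-(p : ℤ)) = ((m - p : ℕ) : ℤ) := by omega
        rw [hrm]
        have hmem := ih (i'.1.1.length + i'.2) hszi i' rfl (m - p)
        have hle : ((i'.level : ℤ) - ((m - p : ℕ) : ℤ)) =
            ((VirIdx.level ((⟨p :: l', hl⟩, q) : VirIdx) : ℤ) - (m : ℤ)) := by
          rw [hblev]; omega
        rw [hle] at hmem
        exact F_mono Vm (by omega) hmem
      · push_neg at hpm
        have hrm : (m : ℤ) + (-(p : ℤ)) = -(((p - m : ℕ)) : ℤ) := by omega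
        rw [hrm]
        have hmem := neg_mem Vm (i'.level + (p - m)) (p - m) (by omega) i' rfl
        have hle : ((i'.level : ℤ) + ((p - m : ℕ) : ℤ)) =
            ((VirIdx.level ((⟨p :: l', hl⟩, q) : VirIdx) : ℤ) - (m : ℤ)) := by
          rw [hblev]; omega
        rw [hle] at hmem
        have hite : (if p - m = 1 then 1 else 0) ≤ 1 := by split_ifs <;> omega
        exact F_mono Vm (by omega) hmem
    · -- central term
      split_ifs with hmp
      · refine Submodule.smul_mem _ _ ?_
        refine bas_mem_F Vm ?_ (by omega)
        rw [hblev]; omega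
      · rw [zero_smul]; exact Submodule.zero_mem _
    · -- L(-p) (L m x)
      have hmem := ih (i'.1.1.length + i'.2) hszi i' rfl m
      refine apply_F Vm ?_ hmem
      intro j hj1 hj2
      have hmem2 := neg_mem Vm (j.level + p) p (by omega) j rfl
      rw [if_neg (by omega)] at hmem2
      have hle : ((j.level : ℤ) + (p : ℤ)) =
          ((VirIdx.level ((⟨p :: l', hl⟩, q) : VirIdx) : ℤ) - (m : ℤ)) := by
        rw [hj1, hblev]; push_cast; ring
      rw [hle] at hmem2
      exact F_mono Vm (by omega) hmem2

end VirAux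


namespace VirAux

variable {M : Type} [AddCommGroup M] [Module ℂ M] {c h : ℂ} (Vm : VirVerma M c h)

lemma F_bot {ℓ : ℤ} (hℓ : ℓ < 0) (Q : ℕ) : F Vm ℓ Q = ⊥ := by
  unfold F
  rw [Submodule.span_eq_bot]
  rintro v ⟨j, hj1, -, rfl⟩
  exfalso
  have : (0 : ℤ) ≤ (j.level : ℤ) := Int.natCast_nonneg _
  omega

lemma L_bas_mem (m : ℤ) (i : VirIdx) :
    Vm.L m (Vm.bas i) ∈ F Vm ((VirIdx.level i : ℤ) - m) (i.2 + 1) := by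
  rcases le_or_gt 0 m with hm | hm
  · obtain ⟨n, rfl⟩ : ∃ n : ℕ, m = (n : ℤ) := ⟨m.toNat, by omega⟩
    exact pos_mem Vm _ i rfl n
  · have hmeq : m = -(((-m).toNat : ℕ) : ℤ) := by omega
    rw [hmeq]
    have hmem := neg_mem Vm (VirIdx.level i + (-m).toNat) (-m).toNat (by omega) i rfl
    have hle : ((VirIdx.level i : ℤ) + (((-m).toNat : ℕ) : ℤ)) =
        ((VirIdx.level i : ℤ) - (-((((-m).toNat : ℕ) : ℤ)))) := by ring
    rw [hle] at hmem
    refine F_mono Vm ?_ hmem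
    have : (if (-m).toNat = 1 then 1 else 0) ≤ 1 := by split_ifs <;> omega
    omega

lemma L_bas_mem_neg {m : ℤ} (hm : m ≤ -2) (i : VirIdx) :
    Vm.L m (Vm.bas i) ∈ F Vm ((VirIdx.level i : ℤ) - m) i.2 := by
  have hmeq : m = -(((-m).toNat : ℕ) : ℤ) := by omega
  rw [hmeq]
  have hmem := neg_mem Vm (VirIdx.level i + (-m).toNat) (-m).toNat (by omega) i rfl
  rw [if_neg (by omega)] at hmem
  have hle : ((VirIdx.level i : ℤ) + (((-m).toNat : ℕ) : ℤ)) =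
      ((VirIdx.level i : ℤ) - (-((((-m).toNat : ℕ) : ℤ)))) := by ring
  rw [hle] at hmem
  exact F_mono Vm (by omega) hmem

end VirAux

/-- Proposition 5.10 of the paper.
With the setup of a Verma module `W = M(c,h)` in a Feigin–Fuchs block of type (a),
(b) or (c), `W₂ = M(c,h₁)` the submodule generated by a singular vector of level `N`,
`W₁` the complementary subspace and `π_{W₂}` the projection along `W₁`: for
`w₁ ∈ W₁`, writing `Y_W(ω,x)w₁ = ∑ₘ L(m) w₁ x^{-m-2}`, the series `π_{W₂}Y_W(ω,x)w₁`
is a finite Laurent polynomial in `W₂[x,x⁻¹]`, and it is nonzero only when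
`Ind(w₁) = N - 1`. -/
theorem projection_of_omega_action_is_laurent_polynomial
    {M : Type} [AddCommGroup M] [Module ℂ M] (c h : ℂ) (Vm : VirVerma M c h)
    (hblock : ∀ U : Submodule ℂ M, VirInvariant Vm.toVirRep U → U ≠ ⊥ → U ≠ ⊤ →
      ∃ t : M, IsSingular Vm.toVirRep t ∧ U = VirGen Vm.toVirRep {t})
    (N : ℕ) (hN : 1 ≤ N) (s : M)
    (hsing : IsSingular Vm.toVirRep s)
    (hlev : ∀ i ∈ (Vm.bas.repr s).support, VirIdx.level i = N)
    (hnorm : Vm.bas.repr s (VirIdx.pure N) = 1)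
    (W2 : Submodule ℂ M) (hW2 : W2 = VirGen Vm.toVirRep {s})
    (W1 : Submodule ℂ M)
    (hW1 : W1 = Submodule.span ℂ {x : M | ∃ i : VirIdx, i.2 < N ∧ x = Vm.bas i})
    (hcompl : IsCompl W2 W1) :
    ∀ w1 ∈ W1,
      {m : ℤ |
        (W2.subtype ∘ₗ Submodule.linearProjOfIsCompl W2 W1 hcompl) (Vm.L m w1) ≠ 0}.Finite ∧
      ((∃ m : ℤ,
          (W2.subtype ∘ₗ Submodule.linearProjOfIsCompl W2 W1 hcompl) (Vm.L m w1) ≠ 0) →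
        Vm.Ind w1 = (N : ℤ) - 1) := by
  intro w1 hw1
  have hπ0 : ∀ x ∈ W1,
      (W2.subtype ∘ₗ Submodule.linearProjOfIsCompl W2 W1 hcompl) x = 0 := by
    intro x hx
    simp [LinearMap.comp_apply, Submodule.linearProjOfIsCompl_apply_right' hcompl hx]
    exact Submodule.linearProjOfIsCompl_apply_right' hcompl hx
  have hsetimg : {x : M | ∃ i : VirIdx, i.2 < N ∧ x = Vm.bas i} =
      Vm.bas '' {i : VirIdx | i.2 < N} := by
    ext v
    constructor
    · rintro ⟨i, hi, rfl⟩; exact ⟨i, hi, rfl⟩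
    · rintro ⟨i, hi, rfl⟩; exact ⟨i, hi, rfl⟩
  have hsupp : ↑(Vm.bas.repr w1).support ⊆ {i : VirIdx | i.2 < N} := by
    rw [hW1, hsetimg] at hw1
    exact Vm.bas.mem_span_image.1 hw1
  have hFle : ∀ (ℓ : ℤ) (Q : ℕ), Q < N → VirAux.F Vm ℓ Q ≤ W1 := by
    intro ℓ Q hQ
    rw [hW1]
    refine Submodule.span_le.2 ?_
    rintro v ⟨j, hj1, hj2, rfl⟩
    exact Submodule.subset_span ⟨j, by omega, rfl⟩
  set T := (Vm.bas.repr w1).support with hT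
  set K := T.sup VirIdx.level with hK
  have hwmem : ∀ s : Set VirIdx, ↑T ⊆ s → w1 ∈ Submodule.span ℂ (Vm.bas '' s) :=
    fun s hs => Vm.bas.mem_span_image.2 hs
  -- vanishing for m > K
  have hvan : ∀ m : ℤ, (K : ℤ) < m → Vm.L m w1 = 0 := by
    intro m hm
    have hmem : Vm.L m w1 ∈ (⊥ : Submodule ℂ M) := by
      refine VirAux.apply_mem_of_mem_span (VirAux.Lm Vm m) ?_ (hwmem _ (subset_refl _))
      rintro v ⟨j, hjT, rfl⟩
      have hjK : VirIdx.level j ≤ K := Finset.le_sup hjT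
      have := VirAux.L_bas_mem Vm m j
      rwa [VirAux.F_bot Vm (by omega) (j.2 + 1)] at this
    simpa using hmem
  -- membership in W1 for m ≤ -2
  have hnegW1 : ∀ m : ℤ, m ≤ -2 → Vm.L m w1 ∈ W1 := by
    intro m hm
    refine VirAux.apply_mem_of_mem_span (VirAux.Lm Vm m) ?_ (hwmem _ (subset_refl _))
    rintro v ⟨j, hjT, rfl⟩
    have hjN : j.2 < N := hsupp hjT
    exact hFle _ j.2 hjN (VirAux.L_bas_mem_neg Vm hm j)
  constructor
  · -- finiteness
    refine Set.Finite.subset (Set.finite_Icc (-1 : ℤ) (K : ℤ)) ?_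
    intro m hm
    simp only [Set.mem_setOf_eq] at hm
    constructor
    · by_contra hcon
      push_neg at hcon
      exact hm (hπ0 _ (hnegW1 m (by omega)))
    · by_contra hcon
      push_neg at hcon
      rw [hvan m (by omega)] at hm
      simp at hm
  · -- index claim
    rintro ⟨m, hne⟩
    have hw10 : w1 ≠ 0 := by
      rintro rfl
      rw [(Vm.L_linear m).map_zero] at hne
      simp at hne
    have hTne : (Vm.bas.repr w1) ≠ 0 := fun h0 => hw10 (Vm.bas.repr.map_eq_zero_iff.1 h0)
    have hexists : ∃ i ∈ T, i.2 = N - 1 := by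
      by_contra hcon
      push_neg at hcon
      have hsub : ↑T ⊆ {i : VirIdx | i.2 + 1 < N} := by
        intro i hi
        have h1 : i.2 < N := hsupp hi
        have h2 : i.2 ≠ N - 1 := hcon i hi
        simp only [Set.mem_setOf_eq]
        omega
      have hmem : Vm.L m w1 ∈ W1 := by
        refine VirAux.apply_mem_of_mem_span (VirAux.Lm Vm m) ?_ (hwmem _ hsub)
        rintro v ⟨j, hjs, rfl⟩
        have hjN : j.2 + 1 < N := hjs
        exact hFle _ (j.2 + 1) hjN (VirAux.L_bas_mem Vm m j)
      exact hne (hπ0 _ hmem)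
    obtain ⟨i0, hi0T, hi0⟩ := hexists
    have hmax : (T.image fun i : VirIdx => (i.2 : ℤ)).max =
        (((N : ℤ) - 1 : ℤ) : WithBot ℤ) := by
      apply le_antisymm
      · refine Finset.max_le ?_
        intro b hb
        rcases Finset.mem_image.1 hb with ⟨i, hiT, rfl⟩
        have hiN : i.2 < N := hsupp hiT
        exact WithBot.coe_le_coe.2 (by omega)
      · refine Finset.le_max ?_
        refine Finset.mem_image.2 ⟨i0, hi0T, ?_⟩
        omega
    unfold VirVerma.Ind
    rw [← hT, hmax]
    rfl
end
end
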